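/- arXiv:math/0701266 — 4 statements merged into one kernel-verified Lean document; each statement's English description precedes it below -/
import Mathlib

section
/- Let G ⊂ GL(V) be an irreducible complex reflection group with the ℚ-form V = V_0 ⊗_ℚ K″ over which fundamental invariants f_1, …, f_r can be chosen in S(V_0^*). Let V^reg be the complement in V of the reflecting hyperplanes of G, and let Δ = ∏_H l_H^{e_H} be the discriminant, where H runs over the reflecting hyperplanes, l_H is a linear form with kernel H, and e_H is the order of the pointwise stabilizer of H in G. Then some nonzero scalar multiple λ^{−1}Δ (λ ∈ K″^×) lies in S(V_0^*); consequently the varieties V^reg and V^reg/G, as well as the quotient morphism V^reg → V^reg/G, are defined over ℚ (V^reg/G being the localization of Spec ℚ[f_1,…,f_r] at the image of Δ). -/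
open Module LinearMap

section Defs

variable {𝕜 V : Type*} [Field 𝕜] [AddCommGroup V] [Module 𝕜 V]

/-- A (pseudo)reflection: a nontrivial finite-order linear automorphism
whose fixed subspace is a hyperplane. -/
def IsPseudoReflection (g : V ≃ₗ[𝕜] V) : Prop :=
  IsOfFinOrder g ∧ g ≠ 1 ∧
    Module.finrank 𝕜 (LinearMap.ker ((g : V →ₗ[𝕜] V) - LinearMap.id)) + 1 = Module.finrank 𝕜 V

/-- The set of reflections of a linear group. -/
def reflectionsOf (G : Subgroup (V ≃ₗ[𝕜] V)) : Set (V ≃ₗ[𝕜] V) :=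
  {g | g ∈ G ∧ IsPseudoReflection g}

/-- A reflection group: a finite linear group generated by its reflections. -/
def IsReflectionGroup (G : Subgroup (V ≃ₗ[𝕜] V)) : Prop :=
  Finite G ∧ Subgroup.closure (reflectionsOf G) = G

/-- The group `G` acts irreducibly on `V`. -/
def ActsIrreducibly (G : Subgroup (V ≃ₗ[𝕜] V)) : Prop :=
  Nontrivial V ∧
    ∀ W : Submodule 𝕜 V, (∀ g ∈ G, W.map ((g : V ≃ₗ[𝕜] V) : V →ₗ[𝕜] V) ≤ W) → W = ⊥ ∨ W = ⊤

/-- A central automorphism: `α g ∈ g · Z(H)` for every `g`. -/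
def IsCentralAut {H : Type*} [Group H] (α : MulAut H) : Prop :=
  ∀ g : H, g⁻¹ * α g ∈ Subgroup.center H

/-- An automorphism of `G` preserving the set of reflections of `G`. -/
def PreservesReflections (G : Subgroup (V ≃ₗ[𝕜] V)) (α : MulAut ↥G) : Prop :=
  ∀ g : ↥G, IsPseudoReflection ((g : V ≃ₗ[𝕜] V)) ↔ IsPseudoReflection ((α g : V ≃ₗ[𝕜] V))

end Defs


section Aux

variable {F K V ι : Type*} [Field F] [Field K] [Algebra F K]
  [AddCommGroup V] [Module K V] [Fintype ι]

/-- The semilinear "Galois" map on `V` induced by a ring endomorphism of `K`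
through the basis `b`. -/
noncomputable def galB (b : Basis ι K V) (σ : K →+* K) : V →ₛₗ[σ] V where
  toFun v := ∑ i, σ (b.repr v i) • b i
  map_add' u v := by
    simp [map_add, Finsupp.add_apply, add_smul, Finset.sum_add_distrib]
  map_smul' a v := by
    simp [Finsupp.smul_apply, smul_eq_mul, map_mul, mul_smul, Finset.smul_sum]

variable (b : Basis ι K V)

lemma galB_apply (σ : K →+* K) (v : V) :
    galB b σ v = ∑ i, σ (b.repr v i) • b i := rfl

lemma repr_galB (σ : K →+* K) (v : V) (i : ι) :
    b.repr (galB b σ v) i = σ (b.repr v i) := by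
  rw [galB_apply]
  exact congrFun (b.repr_sum_self fun i => σ (b.repr v i)) i

@[simp] lemma galB_basis (σ : K →+* K) (i : ι) : galB b σ (b i) = b i := by
  classical
  simp [galB_apply, Basis.repr_self, Finsupp.single_apply, apply_ite σ,
    ite_smul, Finset.sum_ite_eq]

lemma galB_galB (σ τ : K →+* K) (v : V) :
    galB b σ (galB b τ v) = galB b (σ.comp τ) v := by
  apply b.repr.injective
  ext i
  simp [repr_galB]

lemma galB_id (v : V) : galB b (RingHom.id K) v = v := by
  simp [galB_apply, Basis.sum_repr]

lemma galB_symm_galB (σ : K ≃ₐ[F] K) (v : V) :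
    galB b (σ.symm : K →+* K) (galB b (σ : K →+* K) v) = v := by
  rw [galB_galB]
  have h : (σ.symm : K →+* K).comp (σ : K →+* K) = RingHom.id K := by
    ext x; simp
  rw [h, galB_id]

lemma galB_galB_symm (σ : K ≃ₐ[F] K) (v : V) :
    galB b (σ : K →+* K) (galB b (σ.symm : K →+* K) v) = v := by
  have := galB_symm_galB b σ.symm (F := F) v
  rwa [AlgEquiv.symm_symm] at this

lemma galB_injective (σ : K ≃ₐ[F] K) :
    Function.Injective (galB b (σ : K →+* K)) := fun u v h => by
  have := congrArg (galB b (σ.symm : K →+* K)) h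
  simpa [galB_symm_galB] using this

lemma finrank_le_galB [FiniteDimensional K V] (σ : K ≃ₐ[F] K)
    (W W' : Submodule K V)
    (h : ∀ w ∈ W, galB b (σ : K →+* K) w ∈ W') :
    finrank K W ≤ finrank K W' := by
  classical
  let bw := finBasis K W
  have hli0 : LinearIndependent K (fun i => galB b (σ : K →+* K) ((bw i : V))) := by
    rw [Fintype.linearIndependent_iff]
    intro c hc
    have h2 : galB b (σ : K →+* K) (∑ i, σ.symm (c i) • (bw i : V)) = 0 := by
      rw [map_sum]
      have hcoe : ∀ y : K, (σ : K →+* K) (σ.symm y) = y := fun y => σ.apply_symm_apply y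
      simp only [map_smulₛₗ, hcoe]
      exact hc
    have h3 : ∑ i, σ.symm (c i) • (bw i : V) = 0 :=
      galB_injective b σ (by simpa using h2)
    have h4 : LinearIndependent K (fun i => (bw i : V)) :=
      bw.linearIndependent.map' W.subtype (W.ker_subtype)
    intro i
    have h5 := Fintype.linearIndependent_iff.mp h4 (fun i => σ.symm (c i)) h3 i
    calc c i = σ (σ.symm (c i)) := (σ.apply_symm_apply _).symm
    _ = 0 := by rw [h5, map_zero]
  have hli : LinearIndependent K
      (fun i => (⟨galB b (σ : K →+* K) (bw i), h _ (bw i).2⟩ : W')) :=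
    LinearIndependent.of_comp W'.subtype hli0
  simpa using hli.fintype_card_le_finrank

lemma galB_image_image (σ : K ≃ₐ[F] K) (s : Set V) :
    galB b (σ.symm : K →+* K) '' (galB b (σ : K →+* K) '' s) = s := by
  ext v
  constructor
  · rintro ⟨w, ⟨u, hu, rfl⟩, rfl⟩
    rwa [galB_symm_galB]
  · intro hv
    exact ⟨_, ⟨v, hv, rfl⟩, galB_symm_galB b σ v⟩

lemma galB_image_image' (σ : K ≃ₐ[F] K) (s : Set V) :
    galB b (σ : K →+* K) '' (galB b (σ.symm : K →+* K) '' s) = s := by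
  have := galB_image_image b σ.symm (F := F) s
  rwa [AlgEquiv.symm_symm] at this

lemma exists_mul_of_ker_eq (f g : V →ₗ[K] K) (hf : f ≠ 0)
    (h : LinearMap.ker f = LinearMap.ker g) :
    ∃ c : K, c ≠ 0 ∧ ∀ v, g v = c * f v := by
  obtain ⟨v₀, hv₀⟩ : ∃ v, f v ≠ 0 := by
    by_contra h'
    push_neg at h'
    exact hf (LinearMap.ext fun v => h' v)
  have hg₀ : g v₀ ≠ 0 := by
    intro h0
    exact hv₀ (by have : v₀ ∈ LinearMap.ker g := h0; rw [← h] at this; exact this)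
  refine ⟨g v₀ / f v₀, div_ne_zero hg₀ hv₀, fun w => ?_⟩
  have hmem : w - (f w / f v₀) • v₀ ∈ LinearMap.ker f := by
    simp [LinearMap.mem_ker, map_sub, map_smul, smul_eq_mul,
      div_mul_cancel₀ _ hv₀]
  rw [h, LinearMap.mem_ker, map_sub, map_smul, smul_eq_mul, sub_eq_zero] at hmem
  rw [hmem]
  field_simp

end Aux

set_option maxHeartbeats 1000000 in
set_option synthInstance.maxHeartbeats 400000 in
open MvPolynomial in
/-- **Corollary 8 (Marin–Michel).** Let `G ⊂ GL(V)` be an irreducible complex reflection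
group with a ℚ-form `V = V₀ ⊗_ℚ K″` (given by a basis `b`) for which `G` is globally
stable under `Gal(K″/ℚ)`.  Let `𝓗` be the set of reflecting hyperplanes, `l_H` a linear
form with kernel `H`, `e_H` the order of the pointwise stabilizer of `H` in `G`, and
`Δ = ∏_H l_H^{e_H}` the discriminant.  Then some scalar multiple `λ⁻¹Δ` (`λ ∈ K″ˣ`) lies
in `S(V₀^*)`, i.e. is a polynomial with rational coefficients; consequently `V^reg`,
`V^reg/G` and the quotient morphism `V^reg → V^reg/G` are defined over `ℚ`. -/
theorem discriminant_rational_up_to_scalar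
    (K'' : Subfield ℂ) [IsGalois ℚ ↥K''] [FiniteDimensional ℚ ↥K'']
    {V : Type} [AddCommGroup V] [Module ↥K'' V] [FiniteDimensional ↥K'' V]
    (G : Subgroup (V ≃ₗ[↥K''] V)) (hG : IsReflectionGroup G) (hirr : ActsIrreducibly G)
    (b : Basis (Fin (Module.finrank ↥K'' V)) ↥K'' V)
    -- global stability of `G` under `Gal(K″/ℚ)` in the ℚ-form given by `b`:
    (hstable : ∀ σ : ↥K'' ≃ₐ[ℚ] ↥K'', ∀ g ∈ G, ∃ g' ∈ G,
      ∀ i j, LinearMap.toMatrix b b ((g' : V ≃ₗ[↥K''] V) : V →ₗ[↥K''] V) i j =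
        σ (LinearMap.toMatrix b b ((g : V ≃ₗ[↥K''] V) : V →ₗ[↥K''] V) i j))
    -- `𝓗` is the (finite) set of reflecting hyperplanes of `G`:
    (𝓗 : Finset (Submodule ↥K'' V))
    (h𝓗 : (𝓗 : Set (Submodule ↥K'' V)) =
      {H | ∃ g ∈ G, IsPseudoReflection g ∧
        LinearMap.ker (((g : V ≃ₗ[↥K''] V) : V →ₗ[↥K''] V) - LinearMap.id) = H})
    -- `l H` is a linear form with kernel `H`:
    (l : Submodule ↥K'' V → (V →ₗ[↥K''] ↥K''))
    (hl : ∀ H ∈ 𝓗, LinearMap.ker (l H) = H) :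
    -- conclusion: a scalar multiple of the discriminant `Δ = ∏_H l_H^{e_H}` is a
    -- polynomial with rational coefficients (lies in `S(V₀^*)`):
    ∃ (lam : (↥K'')ˣ) (Δ₀ : MvPolynomial (Fin (Module.finrank ↥K'' V)) ℚ),
      MvPolynomial.C ((lam⁻¹ : (↥K'')ˣ) : ↥K'') *
        (∏ H ∈ 𝓗,
          (∑ i, MvPolynomial.C (l H (b i)) * MvPolynomial.X i) ^
            (Nat.card {x : ↥G // ∀ v ∈ H, (x : V ≃ₗ[↥K''] V) v = v})) =
      MvPolynomial.map (algebraMap ℚ ↥K'') Δ₀ := by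

  classical
  obtain ⟨hGfin, -⟩ := hG
  haveI : Finite ↥G := hGfin
  -- the chosen Galois conjugates of elements of `G`
  choose Ψ hΨG hΨmat using fun (σ : ↥K'' ≃ₐ[ℚ] ↥K'') (x : ↥G) => hstable σ ↑x x.2
  have memker : ∀ (h : V ≃ₗ[↥K''] V) (v : V),
      v ∈ LinearMap.ker ((h : V →ₗ[↥K''] V) - LinearMap.id) ↔ h v = v := by
    intro h v
    simp [LinearMap.mem_ker, sub_eq_zero]
  have coord : ∀ (f : V →ₗ[↥K''] V) (w : V) (i),
      b.repr (f w) i = ∑ j, LinearMap.toMatrix b b f i j * b.repr w j := by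
    intro f w i
    rw [← LinearMap.toMatrix_mulVec_repr b b f w]
    rfl
  have hcomm : ∀ (σ : ↥K'' ≃ₐ[ℚ] ↥K'') (x : ↥G) (v : V),
      Ψ σ x (galB b (σ : ↥K'' →+* ↥K'') v)
        = galB b (σ : ↥K'' →+* ↥K'') ((x : V ≃ₗ[↥K''] V) v) := by
    intro σ x v
    apply b.repr.injective
    refine Finsupp.ext fun i => ?_
    calc b.repr (Ψ σ x (galB b (σ : ↥K'' →+* ↥K'') v)) i
        = ∑ j, LinearMap.toMatrix b b ((Ψ σ x : V ≃ₗ[↥K''] V) : V →ₗ[↥K''] V) i j *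
            b.repr (galB b (σ : ↥K'' →+* ↥K'') v) j :=
          coord ((Ψ σ x : V ≃ₗ[↥K''] V) : V →ₗ[↥K''] V) _ i
      _ = ∑ j, σ (LinearMap.toMatrix b b (((x : V ≃ₗ[↥K''] V)) : V →ₗ[↥K''] V) i j) *
            σ (b.repr v j) := by
          refine Finset.sum_congr rfl fun j _ => ?_
          rw [hΨmat σ x i j, repr_galB]
          rfl
      _ = σ (∑ j, LinearMap.toMatrix b b (((x : V ≃ₗ[↥K''] V)) : V →ₗ[↥K''] V) i j *
            b.repr v j) := by
          rw [map_sum]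
          simp [map_mul]
      _ = σ (b.repr ((x : V ≃ₗ[↥K''] V) v) i) := by rw [← coord]; rfl
      _ = b.repr (galB b (σ : ↥K'' →+* ↥K'') ((x : V ≃ₗ[↥K''] V) v)) i := by
          rw [repr_galB]; rfl
  have hΨinv : ∀ (σ : ↥K'' ≃ₐ[ℚ] ↥K'') (x : ↥G),
      Ψ σ.symm ⟨Ψ σ x, hΨG σ x⟩ = (x : V ≃ₗ[↥K''] V) := by
    intro σ x
    apply LinearEquiv.toLinearMap_injective
    apply (LinearMap.toMatrix b b).injective
    refine Matrix.ext fun i j => ?_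
    rw [hΨmat σ.symm ⟨Ψ σ x, hΨG σ x⟩ i j]
    have h3 : (((⟨Ψ σ x, hΨG σ x⟩ : ↥G) : V ≃ₗ[↥K''] V) : V →ₗ[↥K''] V)
        = ((Ψ σ x : V ≃ₗ[↥K''] V) : V →ₗ[↥K''] V) := rfl
    rw [h3, hΨmat σ x i j, AlgEquiv.symm_apply_apply]
  -- the master lemma
  have master : ∀ (σ : ↥K'' ≃ₐ[ℚ] ↥K''), ∀ H ∈ 𝓗, ∃ H', H' ∈ 𝓗 ∧
      ((H' : Set V) = galB b (σ : ↥K'' →+* ↥K'') '' (H : Set V)) ∧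
      Nat.card {x : ↥G // ∀ v ∈ H', (x : V ≃ₗ[↥K''] V) v = v}
        = Nat.card {x : ↥G // ∀ v ∈ H, (x : V ≃ₗ[↥K''] V) v = v} ∧
      ∃ c : ↥K'', c ≠ 0 ∧ ∀ i, σ (l H (b i)) = c * l H' (b i) := by
    intro σ H hH
    have hHmem : H ∈ {H | ∃ g ∈ G, IsPseudoReflection g ∧
        LinearMap.ker (((g : V ≃ₗ[↥K''] V) : V →ₗ[↥K''] V) - LinearMap.id) = H} := by
      rw [← h𝓗]; exact hH
    obtain ⟨g, hgG, hgrefl, hker⟩ := hHmem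
    set x : ↥G := ⟨g, hgG⟩ with hxdef
    set g' : V ≃ₗ[↥K''] V := Ψ σ x with hg'def
    set H' : Submodule ↥K'' V :=
      LinearMap.ker ((g' : V →ₗ[↥K''] V) - LinearMap.id) with hH'def
    have hgal : ∀ v, g' (galB b (σ : ↥K'' →+* ↥K'') v)
        = galB b (σ : ↥K'' →+* ↥K'') (g v) := fun v => hcomm σ x v
    -- the set equality
    have hset : (H' : Set V) = galB b (σ : ↥K'' →+* ↥K'') '' (H : Set V) := by
      ext v
      simp only [SetLike.mem_coe]
      constructor
      · intro hv
        have hv' : g' v = v := (memker g' v).mp hv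
        refine ⟨galB b (σ.symm : ↥K'' →+* ↥K'') v, ?_, galB_galB_symm b σ v⟩
        have h1 : g' (galB b (σ : ↥K'' →+* ↥K'')
            (galB b (σ.symm : ↥K'' →+* ↥K'') v))
            = galB b (σ : ↥K'' →+* ↥K'') (g (galB b (σ.symm : ↥K'' →+* ↥K'') v)) :=
          hgal _
        rw [galB_galB_symm b σ v, hv'] at h1
        have h2 : galB b (σ : ↥K'' →+* ↥K'') (g (galB b (σ.symm : ↥K'' →+* ↥K'') v))
            = galB b (σ : ↥K'' →+* ↥K'') (galB b (σ.symm : ↥K'' →+* ↥K'') v) := by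
          rw [← h1, galB_galB_symm b σ v]
        have h3 := galB_injective b σ h2
        simp only [SetLike.mem_coe]
        rw [← hker]
        exact (memker g _).mpr h3
      · rintro ⟨w, hw, rfl⟩
        have hgw : g w = w := (memker g w).mp (hker ▸ (SetLike.mem_coe.mp hw))
        exact (memker g' _).mpr (by rw [hgal w, hgw])
    -- `g'` is a pseudo-reflection
    have hfin' : IsOfFinOrder g' := by
      obtain ⟨k, hk, hpow⟩ :=
        (isOfFinOrder_of_finite (⟨g', hΨG σ x⟩ : ↥G)).exists_pow_eq_one
      refine isOfFinOrder_iff_pow_eq_one.mpr ⟨k, hk, ?_⟩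
      have := congrArg (Subtype.val) hpow
      simpa using this
    have hne1 : g' ≠ 1 := by
      intro h1
      apply hgrefl.2.1
      refine LinearEquiv.toLinearMap_injective (LinearMap.ext fun w => ?_)
      have h2 := hgal w
      rw [h1] at h2
      simp only [LinearEquiv.coe_one, id_eq] at h2
      have h3 := galB_injective b σ h2
      simpa using h3.symm
    have hle1 : finrank ↥K'' H ≤ finrank ↥K'' H' := by
      refine finrank_le_galB b σ H H' (fun w hw => ?_)
      rw [← SetLike.mem_coe, hset]
      exact ⟨w, hw, rfl⟩
    have hle2 : finrank ↥K'' H' ≤ finrank ↥K'' H := by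
      refine finrank_le_galB b σ.symm H' H (fun v hv => ?_)
      rw [← SetLike.mem_coe, hset] at hv
      obtain ⟨w, hw, rfl⟩ := hv
      rw [galB_symm_galB]
      exact hw
    have hrank : finrank ↥K'' H + 1 = finrank ↥K'' V := by
      have h := hgrefl.2.2
      rwa [hker] at h
    have hrank' : finrank ↥K'' H' + 1 = finrank ↥K'' V := by
      rw [le_antisymm hle2 hle1]
      exact hrank
    have hrefl' : IsPseudoReflection g' := ⟨hfin', hne1, hrank'⟩
    have hH'in : H' ∈ 𝓗 := by
      rw [← Finset.mem_coe, h𝓗]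
      exact ⟨g', hΨG σ x, hrefl', rfl⟩
    -- the stabilizer cardinalities agree
    have hinv2 : ∀ (z : ↥G), Ψ σ ⟨Ψ σ.symm z, hΨG σ.symm z⟩ = (z : V ≃ₗ[↥K''] V) := by
      intro z
      have := hΨinv σ.symm z
      rwa [AlgEquiv.symm_symm] at this
    have fwd : ∀ y : ↥G, (∀ v ∈ H', (y : V ≃ₗ[↥K''] V) v = v) →
        ∀ w ∈ H, Ψ σ.symm y w = w := by
      intro y hy w hw
      have hmem' : galB b (σ : ↥K'' →+* ↥K'') w ∈ H' := by
        rw [← SetLike.mem_coe, hset]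
        exact ⟨w, hw, rfl⟩
      have h1 := hcomm σ.symm y (galB b (σ : ↥K'' →+* ↥K'') w)
      rw [galB_symm_galB] at h1
      rw [h1, hy _ hmem', galB_symm_galB]
    have bwd : ∀ z : ↥G, (∀ w ∈ H, (z : V ≃ₗ[↥K''] V) w = w) →
        ∀ v ∈ H', Ψ σ z v = v := by
      intro z hz v hv
      rw [← SetLike.mem_coe, hset] at hv
      obtain ⟨w, hw, rfl⟩ := hv
      rw [hcomm σ z w, hz _ hw]
    have hcard : Nat.card {y : ↥G // ∀ v ∈ H', (y : V ≃ₗ[↥K''] V) v = v}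
        = Nat.card {y : ↥G // ∀ v ∈ H, (y : V ≃ₗ[↥K''] V) v = v} := by
      refine Nat.card_congr
        { toFun := fun y => ⟨⟨Ψ σ.symm y.1, hΨG σ.symm y.1⟩, fun w hw => fwd y.1 y.2 w hw⟩
          invFun := fun z => ⟨⟨Ψ σ z.1, hΨG σ z.1⟩, fun v hv => bwd z.1 z.2 v hv⟩
          left_inv := fun y => ?_
          right_inv := fun z => ?_ }
      · apply Subtype.ext
        apply Subtype.ext
        exact hinv2 y.1
      · apply Subtype.ext
        apply Subtype.ext
        exact hΨinv σ z.1
    -- the linear forms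
    have hlH := hl H hH
    have hlH' := hl H' hH'in
    have hH'ne_top : H' ≠ ⊤ := by
      intro htop
      rw [htop, finrank_top] at hrank'
      omega
    have hlH'ne : l H' ≠ 0 := by
      intro h0
      exact hH'ne_top (by rw [← hlH', h0, LinearMap.ker_zero])
    let φ : V →ₗ[↥K''] ↥K'' :=
      { toFun := fun v => σ (l H (galB b (σ.symm : ↥K'' →+* ↥K'') v))
        map_add' := by intro u v; simp [map_add]
        map_smul' := by
          intro a v
          simp only [map_smulₛₗ, map_smul, smul_eq_mul, map_mul, RingHom.id_apply]
          congr 1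
          exact σ.apply_symm_apply a }
    have hφmem : ∀ v, φ v = 0 ↔ v ∈ H' := by
      intro v
      have h1 : φ v = 0 ↔ l H (galB b (σ.symm : ↥K'' →+* ↥K'') v) = 0 := by
        constructor
        · intro h
          have h' : σ (l H (galB b (σ.symm : ↥K'' →+* ↥K'') v)) = 0 := h
          have := congrArg σ.symm h'
          simpa using this
        · intro h
          show σ _ = 0
          rw [h, map_zero]
      rw [h1]
      have h2 : l H (galB b (σ.symm : ↥K'' →+* ↥K'') v) = 0 ↔
          galB b (σ.symm : ↥K'' →+* ↥K'') v ∈ H := by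
        conv_rhs => rw [← hlH]
        exact LinearMap.mem_ker.symm
      rw [h2]
      constructor
      · intro h
        rw [← SetLike.mem_coe, hset]
        exact ⟨_, h, galB_galB_symm b σ v⟩
      · intro h
        rw [← SetLike.mem_coe, hset] at h
        obtain ⟨w, hw, rfl⟩ := h
        rw [galB_symm_galB]
        exact hw
    have hkerφ : LinearMap.ker (l H') = LinearMap.ker φ := by
      ext v
      rw [LinearMap.mem_ker, LinearMap.mem_ker, hφmem]
      conv_rhs => rw [← hlH']
      exact LinearMap.mem_ker.symm
    obtain ⟨c, hc0, hcf⟩ := exists_mul_of_ker_eq (l H') φ hlH'ne hkerφ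
    refine ⟨H', hH'in, hset, hcard, c, hc0, fun i => ?_⟩
    have := hcf (b i)
    have hφb : φ (b i) = σ (l H (b i)) := by
      show σ (l H (galB b (σ.symm : ↥K'' →+* ↥K'') (b i))) = _
      rw [galB_basis]
    rw [← hφb, this]
  -- totalized master data
  have master' : ∀ (σ : ↥K'' ≃ₐ[ℚ] ↥K''),
      ∃ (Φ : Submodule ↥K'' V → Submodule ↥K'' V) (cf : Submodule ↥K'' V → ↥K''),
      ∀ H ∈ 𝓗, Φ H ∈ 𝓗 ∧
        ((Φ H : Set V) = galB b (σ : ↥K'' →+* ↥K'') '' (H : Set V)) ∧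
        Nat.card {x : ↥G // ∀ v ∈ Φ H, (x : V ≃ₗ[↥K''] V) v = v}
          = Nat.card {x : ↥G // ∀ v ∈ H, (x : V ≃ₗ[↥K''] V) v = v} ∧
        cf H ≠ 0 ∧ ∀ i, σ (l H (b i)) = cf H * l (Φ H) (b i) := by
    intro σ
    choose Φ h1 h2 h3 cf h4 h5 using master σ
    refine ⟨fun H => if h : H ∈ 𝓗 then Φ H h else H,
      fun H => if h : H ∈ 𝓗 then cf H h else 1, fun H hH => ?_⟩
    simp only [dif_pos hH]
    exact ⟨h1 H hH, h2 H hH, h3 H hH, h4 H hH, h5 H hH⟩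
  -- the discriminant
  set Δ : MvPolynomial (Fin (Module.finrank ↥K'' V)) ↥K'' :=
    ∏ H ∈ 𝓗,
      (∑ i, MvPolynomial.C (l H (b i)) * MvPolynomial.X i) ^
        (Nat.card {x : ↥G // ∀ v ∈ H, (x : V ≃ₗ[↥K''] V) v = v}) with hΔdef
  have hcoeffX : ∀ (a : Fin (Module.finrank ↥K'' V) → ↥K'') (i),
      MvPolynomial.coeff (Finsupp.single i 1)
        (∑ j, MvPolynomial.C (a j) * MvPolynomial.X j) = a i := by
    intro a i
    rw [MvPolynomial.coeff_sum]
    rw [Finset.sum_eq_single i]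
    · simp [MvPolynomial.coeff_C_mul, MvPolynomial.coeff_X]
    · intro j _ hji
      rw [MvPolynomial.coeff_C_mul, MvPolynomial.coeff_X']
      rw [if_neg (fun h => hji ((Finsupp.single_left_inj one_ne_zero).mp h)), mul_zero]
    · intro h
      exact absurd (Finset.mem_univ i) h
  have hHne_top : ∀ H ∈ 𝓗, H ≠ ⊤ := by
    intro H hH htop
    have hHmem : H ∈ {H | ∃ g ∈ G, IsPseudoReflection g ∧
        LinearMap.ker (((g : V ≃ₗ[↥K''] V) : V →ₗ[↥K''] V) - LinearMap.id) = H} := by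
      rw [← h𝓗]; exact hH
    obtain ⟨g, hgG, hgrefl, hker⟩ := hHmem
    have h := hgrefl.2.2
    rw [hker, htop, finrank_top] at h
    omega
  have hlinne : ∀ H ∈ 𝓗,
      (∑ i, MvPolynomial.C (l H (b i)) * MvPolynomial.X i :
        MvPolynomial (Fin (Module.finrank ↥K'' V)) ↥K'') ≠ 0 := by
    intro H hH heq
    have hl0 : l H = 0 := by
      apply b.ext
      intro i
      have := hcoeffX (fun j => l H (b j)) i
      rw [heq] at this
      simp only [MvPolynomial.coeff_zero] at this
      simp [← this]
    exact hHne_top H hH (by rw [← hl H hH, hl0, LinearMap.ker_zero])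
  have hΔne : Δ ≠ 0 := by
    rw [hΔdef]
    exact Finset.prod_ne_zero_iff.mpr fun H hH => pow_ne_zero _ (hlinne H hH)
  -- Galois twists the discriminant by a scalar
  have hmapΔ : ∀ σ : ↥K'' ≃ₐ[ℚ] ↥K'', ∃ c : ↥K'', c ≠ 0 ∧
      MvPolynomial.map (σ : ↥K'' →+* ↥K'') Δ = MvPolynomial.C c * Δ := by
    intro σ
    obtain ⟨Φ, cf, hm⟩ := master' σ
    obtain ⟨Φ', cf', hm'⟩ := master' σ.symm
    refine ⟨∏ H ∈ 𝓗, cf H ^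
      (Nat.card {x : ↥G // ∀ v ∈ H, (x : V ≃ₗ[↥K''] V) v = v}), ?_, ?_⟩
    · exact Finset.prod_ne_zero_iff.mpr fun H hH => pow_ne_zero _ (hm H hH).2.2.2.1
    rw [hΔdef, map_prod]
    have step1 : ∀ H ∈ 𝓗,
        MvPolynomial.map (σ : ↥K'' →+* ↥K'')
          ((∑ i, MvPolynomial.C (l H (b i)) * MvPolynomial.X i) ^
            (Nat.card {x : ↥G // ∀ v ∈ H, (x : V ≃ₗ[↥K''] V) v = v}))
        = (MvPolynomial.C (cf H) *
            (∑ i, MvPolynomial.C (l (Φ H) (b i)) * MvPolynomial.X i)) ^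
            (Nat.card {x : ↥G // ∀ v ∈ H, (x : V ≃ₗ[↥K''] V) v = v}) := by
      intro H hH
      rw [map_pow]
      congr 1
      rw [map_sum]
      rw [Finset.mul_sum]
      refine Finset.sum_congr rfl fun i _ => ?_
      have hmi : (σ : ↥K'' →+* ↥K'') (l H (b i)) = cf H * l (Φ H) (b i) :=
        (hm H hH).2.2.2.2 i
      rw [map_mul, MvPolynomial.map_C, MvPolynomial.map_X, hmi,
        MvPolynomial.C_mul, mul_assoc]
    rw [Finset.prod_congr rfl step1]
    have step2 : ∀ H ∈ 𝓗,
        (MvPolynomial.C (cf H) *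
            (∑ i, MvPolynomial.C (l (Φ H) (b i)) * MvPolynomial.X i)) ^
            (Nat.card {x : ↥G // ∀ v ∈ H, (x : V ≃ₗ[↥K''] V) v = v})
        = MvPolynomial.C (cf H ^
            (Nat.card {x : ↥G // ∀ v ∈ H, (x : V ≃ₗ[↥K''] V) v = v})) *
          (∑ i, MvPolynomial.C (l (Φ H) (b i)) * MvPolynomial.X i) ^
            (Nat.card {x : ↥G // ∀ v ∈ Φ H, (x : V ≃ₗ[↥K''] V) v = v}) := by
      intro H hH
      rw [mul_pow, map_pow, (hm H hH).2.2.1]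
    rw [Finset.prod_congr rfl step2, Finset.prod_mul_distrib, ← map_prod]
    congr 1
    -- reindex the product by the bijection Φ of 𝓗
    have hleft : ∀ H ∈ 𝓗, Φ' (Φ H) = H := by
      intro H hH
      apply SetLike.coe_injective
      rw [(hm' (Φ H) (hm H hH).1).2.1, (hm H hH).2.1]
      exact galB_image_image b σ _
    have hright : ∀ H ∈ 𝓗, Φ (Φ' H) = H := by
      intro H hH
      apply SetLike.coe_injective
      rw [(hm (Φ' H) (hm' H hH).1).2.1, (hm' H hH).2.1]
      exact galB_image_image' b σ _
    exact Finset.prod_bij' (fun H _ => Φ H) (fun H _ => Φ' H)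
      (fun H hH => (hm H hH).1) (fun H hH => (hm' H hH).1)
      (fun H hH => hleft H hH) (fun H hH => hright H hH)
      (fun H hH => rfl)
  choose cu hcu0 hcu using hmapΔ
  -- the 1-cocycle
  let f : (↥K'' ≃ₐ[ℚ] ↥K'') → (↥K'')ˣ := fun σ => Units.mk0 (cu σ) (hcu0 σ)
  have hco : groupCohomology.IsMulCocycle₁ f := by
    intro σ τ
    have h1 : MvPolynomial.map ((σ * τ : ↥K'' ≃ₐ[ℚ] ↥K'') : ↥K'' →+* ↥K'') Δ
        = MvPolynomial.map (σ : ↥K'' →+* ↥K'') (MvPolynomial.map (τ : ↥K'' →+* ↥K'') Δ) := by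
      rw [MvPolynomial.map_map]
      congr 1
    rw [hcu (σ * τ), hcu τ, map_mul, hcu σ, MvPolynomial.map_C] at h1
    have h2 : (MvPolynomial.C (cu (σ * τ)) :
          MvPolynomial (Fin (Module.finrank ↥K'' V)) ↥K'')
        = MvPolynomial.C (σ (cu τ) * cu σ) := by
      apply mul_right_cancel₀ hΔne
      have hσcoe : (σ : ↥K'' →+* ↥K'') (cu τ) = σ (cu τ) := rfl
      rw [hσcoe] at h1
      rw [h1, MvPolynomial.C_mul]
      ring
    have hval : cu (σ * τ) = σ (cu τ) * cu σ :=
      MvPolynomial.C_injective _ _ h2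
    apply Units.ext
    show cu (σ * τ) = _
    rw [hval]
    simp [f, AlgEquiv.smul_units_def]
  obtain ⟨β, hβ⟩ :=
    groupCohomology.isMulCoboundary₁_of_isMulCocycle₁_of_aut_to_units f hco
  refine ⟨β, ?_⟩
  have hβval : ∀ σ : ↥K'' ≃ₐ[ℚ] ↥K'', σ (β : ↥K'') * ((β : ↥K''))⁻¹ = cu σ := by
    intro σ
    have h := congrArg Units.val (hβ σ)
    simpa [f, AlgEquiv.smul_units_def, div_eq_mul_inv] using h
  set Δ' : MvPolynomial (Fin (Module.finrank ↥K'' V)) ↥K'' :=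
    MvPolynomial.C ((β⁻¹ : (↥K'')ˣ) : ↥K'') * Δ with hΔ'def
  have hfix : ∀ σ : ↥K'' ≃ₐ[ℚ] ↥K'', MvPolynomial.map (σ : ↥K'' →+* ↥K'') Δ' = Δ' := by
    intro σ
    rw [hΔ'def, map_mul, MvPolynomial.map_C, hcu σ, ← mul_assoc, ← MvPolynomial.C_mul]
    congr 2
    have hβne : (β : ↥K'') ≠ 0 := Units.ne_zero β
    rw [← hβval σ]
    rw [Units.val_inv_eq_inv_val, map_inv₀]
    field_simp
    rfl
  have hratio : ∀ m : Fin (Module.finrank ↥K'' V) →₀ ℕ,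
      ∃ q : ℚ, algebraMap ℚ ↥K'' q = MvPolynomial.coeff m Δ' := by
    intro m
    have hfixc : ∀ σ : ↥K'' ≃ₐ[ℚ] ↥K'', σ (MvPolynomial.coeff m Δ') = MvPolynomial.coeff m Δ' := by
      intro σ
      conv_rhs => rw [← hfix σ]
      rw [MvPolynomial.coeff_map]
      rfl
    have hmem : MvPolynomial.coeff m Δ' ∈
        IntermediateField.fixedField (⊤ : Subgroup (↥K'' ≃ₐ[ℚ] ↥K'')) := by
      intro g
      exact hfixc g.1
    have hbot : IntermediateField.fixedField (⊤ : Subgroup (↥K'' ≃ₐ[ℚ] ↥K'')) = ⊥ :=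
      OrderIso.map_bot (IsGalois.intermediateFieldEquivSubgroup (F := ℚ) (E := ↥K'')).symm
    rw [hbot] at hmem
    exact IntermediateField.mem_bot.mp hmem
  choose q hq using hratio
  refine ⟨∑ m ∈ Δ'.support, MvPolynomial.monomial m (q m), ?_⟩
  rw [map_sum]
  have hms : ∀ m ∈ Δ'.support,
      MvPolynomial.map (algebraMap ℚ ↥K'') (MvPolynomial.monomial m (q m))
        = MvPolynomial.monomial m (MvPolynomial.coeff m Δ') := by
    intro m _
    rw [MvPolynomial.map_monomial, hq]
  rw [Finset.sum_congr rfl hms]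
  exact (MvPolynomial.support_sum_monomial_coeff Δ').symm
end

section
/- Let G = G(de,e,r) and let t = Diag(ζ_{de}, 1, …, 1) ∈ G(de,1,r), which normalizes G. The automorphism Ad t^i of G (conjugation by t^i) is inner if and only if gcd(e,r) divides i; consequently the image of Ad t in Out(G) has order gcd(e,r). -/
open Module LinearMap

section Aux

variable {r : ℕ}

def MonoM (σ : Equiv.Perm (Fin r)) (f : Fin r → ℂ) : Matrix (Fin r) (Fin r) ℂ :=
  Matrix.of fun i j => if i = σ j then f j else 0

lemma MonoM_apply (σ : Equiv.Perm (Fin r)) (f : Fin r → ℂ) (i j : Fin r) :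
    MonoM σ f i j = if i = σ j then f j else 0 := rfl

lemma MonoM_mul (σ τ : Equiv.Perm (Fin r)) (f g : Fin r → ℂ) :
    MonoM σ f * MonoM τ g = MonoM (σ * τ) (fun j => f (τ j) * g j) := by
  ext i j
  rw [Matrix.mul_apply, Finset.sum_eq_single (τ j)]
  · simp only [MonoM_apply, Equiv.Perm.mul_apply]
    split_ifs <;> simp_all
  · intro b _ hb
    simp only [MonoM_apply, if_neg hb, mul_zero]
  · simp

lemma MonoM_one : MonoM (1 : Equiv.Perm (Fin r)) (fun _ => (1:ℂ)) = 1 := by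
  ext i j
  simp [MonoM_apply, Matrix.one_apply, eq_comm]
  rfl

lemma MonoM_entries_eq {σ τ : Equiv.Perm (Fin r)} {f g : Fin r → ℂ}
    (hf : ∀ j, f j ≠ 0) (h : MonoM σ f = MonoM τ g) : ∀ j, f j = g j := by
  intro j
  have h1 : MonoM σ f (σ j) j = MonoM τ g (σ j) j := by rw [h]
  simp only [MonoM_apply, if_pos rfl] at h1
  by_cases hc : σ j = τ j
  · rwa [if_pos hc] at h1
  · rw [if_neg hc] at h1; exact absurd h1 (hf j)

lemma MonoM_mul_inv (σ : Equiv.Perm (Fin r)) (f : Fin r → ℂ) (hf : ∀ j, f j ≠ 0) :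
    MonoM σ f * MonoM σ⁻¹ (fun j => (f (σ⁻¹ j))⁻¹) = 1 := by
  rw [MonoM_mul, mul_inv_cancel]
  have : (fun j => f (σ⁻¹ j) * (f (σ⁻¹ j))⁻¹) = fun _ : Fin r => (1:ℂ) := by
    funext j; exact mul_inv_cancel₀ (hf _)
  rw [this, MonoM_one]

lemma MonoM_inv_mul (σ : Equiv.Perm (Fin r)) (f : Fin r → ℂ) (hf : ∀ j, f j ≠ 0) :
    MonoM σ⁻¹ (fun j => (f (σ⁻¹ j))⁻¹) * MonoM σ f = 1 := by
  rw [MonoM_mul, inv_mul_cancel]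
  have : (fun j => (f (σ⁻¹ (σ j)))⁻¹ * f j) = fun _ : Fin r => (1:ℂ) := by
    funext j; rw [show σ⁻¹ (σ j) = j from σ.symm_apply_apply j]; exact inv_mul_cancel₀ (hf _)
  rw [this, MonoM_one]

/-- Monomial matrices as elements of `GL`. -/
noncomputable def monoGL (σ : Equiv.Perm (Fin r)) (f : Fin r → ℂ) (hf : ∀ j, f j ≠ 0) :
    Matrix.GeneralLinearGroup (Fin r) ℂ :=
  ⟨MonoM σ f, MonoM σ⁻¹ (fun j => (f (σ⁻¹ j))⁻¹), MonoM_mul_inv σ f hf, MonoM_inv_mul σ f hf⟩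

@[simp] lemma monoGL_val (σ : Equiv.Perm (Fin r)) (f : Fin r → ℂ) (hf : ∀ j, f j ≠ 0) :
    ((monoGL σ f hf : Matrix.GeneralLinearGroup (Fin r) ℂ) : Matrix (Fin r) (Fin r) ℂ)
      = MonoM σ f := rfl

/-- the inverse of a unit whose value is monomial. -/
lemma inv_val_of_val_eq (u : Matrix.GeneralLinearGroup (Fin r) ℂ)
    (σ : Equiv.Perm (Fin r)) (f : Fin r → ℂ) (hf : ∀ j, f j ≠ 0)
    (h : (u : Matrix (Fin r) (Fin r) ℂ) = MonoM σ f) :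
    ((u⁻¹ : Matrix.GeneralLinearGroup (Fin r) ℂ) : Matrix (Fin r) (Fin r) ℂ)
      = MonoM σ⁻¹ (fun j => (f (σ⁻¹ j))⁻¹) := by
  have h2 : (u : Matrix (Fin r) (Fin r) ℂ) * MonoM σ⁻¹ (fun j => (f (σ⁻¹ j))⁻¹) = 1 := by
    rw [h]; exact MonoM_mul_inv σ f hf
  calc ((u⁻¹ : Matrix.GeneralLinearGroup (Fin r) ℂ) : Matrix (Fin r) (Fin r) ℂ)
      = ((u⁻¹ : Matrix.GeneralLinearGroup (Fin r) ℂ) : Matrix (Fin r) (Fin r) ℂ) *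
        ((u : Matrix (Fin r) (Fin r) ℂ) * MonoM σ⁻¹ (fun j => (f (σ⁻¹ j))⁻¹)) := by
        rw [h2, mul_one]
    _ = (((u⁻¹ * u : Matrix.GeneralLinearGroup (Fin r) ℂ))
          : Matrix (Fin r) (Fin r) ℂ) * MonoM σ⁻¹ (fun j => (f (σ⁻¹ j))⁻¹) := by
        rw [Units.val_mul, mul_assoc]
    _ = MonoM σ⁻¹ (fun j => (f (σ⁻¹ j))⁻¹) := by rw [inv_mul_cancel]; simp

end Aux


/-- The set of monomial matrices constituting `G(de,e,r)` (given here by the parameters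
`d`, `e`, `r`): the nonzero entries are `de`-th roots of unity and their product is a
`d`-th root of unity. -/
def monomialSet (d e r : ℕ) : Set (Matrix.GeneralLinearGroup (Fin r) ℂ) :=
  {A | ∃ σ : Equiv.Perm (Fin r),
    (∀ i j, ((A : Matrix (Fin r) (Fin r) ℂ) i j ≠ 0 ↔ i = σ j)) ∧
    (∀ j, ((A : Matrix (Fin r) (Fin r) ℂ) (σ j) j) ^ (d * e) = 1) ∧
    (∏ j, (A : Matrix (Fin r) (Fin r) ℂ) (σ j) j) ^ d = 1}

/-- The imprimitive complex reflection group `G(de,e,r)`. -/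
def Gdeer (d e r : ℕ) : Subgroup (Matrix.GeneralLinearGroup (Fin r) ℂ) :=
  Subgroup.closure (monomialSet d e r)

section Aux2

variable {d e r : ℕ}

lemma mem_monomialSet_iff {A : Matrix.GeneralLinearGroup (Fin r) ℂ} :
    A ∈ monomialSet d e r ↔ ∃ (σ : Equiv.Perm (Fin r)) (f : Fin r → ℂ),
      (∀ j, f j ≠ 0) ∧ (∀ j, f j ^ (d * e) = 1) ∧ (∏ j, f j) ^ d = 1 ∧
      (A : Matrix (Fin r) (Fin r) ℂ) = MonoM σ f := by
  constructor
  · rintro ⟨σ, h1, h2, h3⟩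
    refine ⟨σ, fun j => (A : Matrix (Fin r) (Fin r) ℂ) (σ j) j,
      fun j => (h1 (σ j) j).mpr rfl, h2, h3, ?_⟩
    ext i j
    rw [MonoM_apply]
    by_cases hij : i = σ j
    · subst hij; rw [if_pos rfl]
    · rw [if_neg hij]
      by_contra hne
      exact hij ((h1 i j).mp hne)
  · rintro ⟨σ, f, hf0, hfn, hfd, hA⟩
    refine ⟨σ, ?_, ?_, ?_⟩
    · intro i j
      rw [hA, MonoM_apply]
      constructor
      · intro hne
        by_contra hij
        rw [if_neg hij] at hne
        exact hne rfl
      · intro hij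
        rw [if_pos hij]
        exact hf0 j
    · intro j
      rw [hA, MonoM_apply, if_pos rfl]
      exact hfn j
    · have : ∀ j, (A : Matrix (Fin r) (Fin r) ℂ) (σ j) j = f j := by
        intro j; rw [hA, MonoM_apply, if_pos rfl]
      rw [Finset.prod_congr rfl fun j _ => this j]
      exact hfd

/-- `monomialSet` is a subgroup. -/
noncomputable def monoSubgroup (d e r : ℕ) : Subgroup (Matrix.GeneralLinearGroup (Fin r) ℂ) where
  carrier := monomialSet d e r
  one_mem' := by
    show (1 : Matrix.GeneralLinearGroup (Fin r) ℂ) ∈ monomialSet d e r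
    rw [mem_monomialSet_iff]
    exact ⟨1, fun _ => 1, fun _ => one_ne_zero, fun _ => one_pow _, by simp,
      by rw [MonoM_one]; rfl⟩
  mul_mem' := by
    intro A B hA hB
    show A * B ∈ monomialSet d e r
    rw [mem_monomialSet_iff]
    rw [mem_monomialSet_iff] at hA hB
    obtain ⟨σ, f, hf0, hfn, hfd, hAv⟩ := hA
    obtain ⟨τ, g, hg0, hgn, hgd, hBv⟩ := hB
    refine ⟨σ * τ, fun j => f (τ j) * g j, fun j => mul_ne_zero (hf0 _) (hg0 _),
      fun j => by rw [mul_pow, hfn, hgn, one_mul], ?_, ?_⟩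
    · rw [Finset.prod_mul_distrib, Equiv.prod_comp τ f, mul_pow, hfd, hgd, one_mul]
    · rw [Units.val_mul, hAv, hBv, MonoM_mul]
  inv_mem' := by
    intro A hA
    show A⁻¹ ∈ monomialSet d e r
    rw [mem_monomialSet_iff]
    replace hA : A ∈ monomialSet d e r := hA
    rw [mem_monomialSet_iff] at hA
    obtain ⟨σ, f, hf0, hfn, hfd, hAv⟩ := hA
    refine ⟨σ⁻¹, fun j => (f (σ⁻¹ j))⁻¹, fun j => inv_ne_zero (hf0 _),
      fun j => by show (f (σ⁻¹ j))⁻¹ ^ (d * e) = 1; rw [inv_pow, hfn, inv_one], ?_, ?_⟩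
    · show (∏ j, (f (σ⁻¹ j))⁻¹) ^ d = 1
      rw [Equiv.prod_comp σ⁻¹ (fun j => (f j)⁻¹), Finset.prod_inv_distrib, inv_pow,
        hfd, inv_one]
    · exact inv_val_of_val_eq A σ f hf0 hAv

lemma mem_Gdeer {A : Matrix.GeneralLinearGroup (Fin r) ℂ} :
    A ∈ Gdeer d e r ↔ A ∈ monomialSet d e r := by
  have : Gdeer d e r = monoSubgroup d e r := Subgroup.closure_eq (monoSubgroup d e r)
  rw [this]; rfl

end Aux2


/-- A matrix is a (pseudo)reflection iff it fixes a hyperplane pointwise,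
i.e. `rank (A - 1) = 1`. -/
def IsMatrixReflection {r : ℕ} (A : Matrix.GeneralLinearGroup (Fin r) ℂ) : Prop :=
  ((A : Matrix (Fin r) (Fin r) ℂ) - 1).rank = 1

/-- An automorphism of a matrix group preserving its set of reflections. -/
def PreservesMatrixReflections {r : ℕ} (G : Subgroup (Matrix.GeneralLinearGroup (Fin r) ℂ))
    (α : MulAut ↥G) : Prop :=
  ∀ g : ↥G, IsMatrixReflection (g : Matrix.GeneralLinearGroup (Fin r) ℂ) ↔
    IsMatrixReflection ((α g : ↥G) : Matrix.GeneralLinearGroup (Fin r) ℂ)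

/-- The diagonal matrix `t = Diag(ζ_{de}, 1, …, 1)`, a generator of `G(de,1,r)`
modulo `G(de,e,r)`. -/
noncomputable def tGL (d e r : ℕ) : Matrix.GeneralLinearGroup (Fin r) ℂ :=
  Matrix.GeneralLinearGroup.mkOfDetNeZero
    (Matrix.diagonal fun i =>
      if (i : ℕ) = 0 then Complex.exp (2 * Real.pi * Complex.I / ((d : ℂ) * e)) else 1)
    (by
      rw [Matrix.det_diagonal]
      refine Finset.prod_ne_zero_iff.mpr fun i _ => ?_
      split
      · exact Complex.exp_ne_zero _
      · exact one_ne_zero)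

section Aux3

variable {d e r : ℕ}

/-- The basic root of unity. -/
noncomputable def zed (d e : ℕ) : ℂ := Complex.exp (2 * Real.pi * Complex.I / ((d : ℂ) * e))

lemma zed_prim (hd : 1 ≤ d) (he : 1 ≤ e) : IsPrimitiveRoot (zed d e) (d * e) := by
  have := Complex.isPrimitiveRoot_exp (d * e) (by positivity)
  rwa [show (((d * e : ℕ) : ℂ)) = (d : ℂ) * e by push_cast; ring] at this

/-- The diagonal entries of `t`. -/
noncomputable def tf (d e r : ℕ) : Fin r → ℂ := fun j => if (j : ℕ) = 0 then zed d e else 1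

lemma tGL_val : ((tGL d e r : Matrix.GeneralLinearGroup (Fin r) ℂ) :
    Matrix (Fin r) (Fin r) ℂ) = MonoM 1 (tf d e r) := by
  show Matrix.diagonal _ = _
  ext i j
  rw [Matrix.diagonal_apply, MonoM_apply]
  by_cases hij : i = j
  · subst hij; simp [tf, zed]
  · rw [if_neg hij, if_neg (by simpa using hij)]

lemma MonoM_diag_pow (f : Fin r → ℂ) (n : ℕ) :
    (MonoM 1 f) ^ n = MonoM 1 (fun j => f j ^ n) := by
  induction n with
  | zero =>
      rw [pow_zero, show (fun j => f j ^ 0) = fun _ : Fin r => (1:ℂ) from by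
        funext j; rw [pow_zero], MonoM_one]
  | succ n ih =>
      rw [pow_succ, ih, MonoM_mul]
      ext i j
      simp [MonoM_apply, Equiv.Perm.mul_apply, Equiv.Perm.one_apply, pow_succ]

lemma tGL_pow_val (i : ℕ) : ((tGL d e r ^ i : Matrix.GeneralLinearGroup (Fin r) ℂ) :
    Matrix (Fin r) (Fin r) ℂ) = MonoM 1 (fun j => tf d e r j ^ i) := by
  rw [Units.val_pow_eq_pow_val, tGL_val, MonoM_diag_pow]

lemma tf_pow_n (hd : 1 ≤ d) (he : 1 ≤ e) (j : Fin r) : tf d e r j ^ (d * e) = 1 := by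
  unfold tf
  split
  · exact (zed_prim hd he).pow_eq_one
  · exact one_pow _

lemma tf_ne_zero (j : Fin r) : tf d e r j ≠ 0 := by
  unfold tf
  split
  · exact Complex.exp_ne_zero _
  · exact one_ne_zero

/-- product of `tf^i` over all indices. -/
lemma prod_tf_pow (hr : 1 ≤ r) (i : ℕ) :
    (∏ j, tf d e r j ^ i) = zed d e ^ i := by
  haveI : NeZero r := ⟨by omega⟩
  have : ∀ j : Fin r, tf d e r j ^ i = if j = 0 then zed d e ^ i else 1 := by
    intro j
    unfold tf
    rcases eq_or_ne j 0 with h | h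
    · subst h; simp
    · rw [if_neg (fun hc => h (Fin.ext (hc.trans (Fin.val_zero r).symm))), if_neg h, one_pow]
  rw [Finset.prod_congr rfl fun j _ => this j, Finset.prod_ite_eq' Finset.univ (0 : Fin r)
    (fun _ => zed d e ^ i), if_pos (Finset.mem_univ _)]

/-- Conjugation by a diagonal unit with `de`-th-root entries preserves `monomialSet`. -/
lemma diag_conj_mem (hd : 1 ≤ d) (he : 1 ≤ e)
    (u : Matrix.GeneralLinearGroup (Fin r) ℂ) (uf : Fin r → ℂ)
    (hu : (u : Matrix (Fin r) (Fin r) ℂ) = MonoM 1 uf)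
    (hun : ∀ j, uf j ^ (d * e) = 1)
    {A : Matrix.GeneralLinearGroup (Fin r) ℂ} (hA : A ∈ monomialSet d e r) :
    u * A * u⁻¹ ∈ monomialSet d e r := by
  have huf0 : ∀ j, uf j ≠ 0 := by
    intro j h
    have := hun j
    rw [h, zero_pow (by positivity)] at this
    exact zero_ne_one this
  rw [mem_monomialSet_iff] at hA ⊢
  obtain ⟨σ, f, hf0, hfn, hfd, hAv⟩ := hA
  have huinv : ((u⁻¹ : Matrix.GeneralLinearGroup (Fin r) ℂ) : Matrix (Fin r) (Fin r) ℂ)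
      = MonoM 1⁻¹ (fun j => (uf ((1 : Equiv.Perm (Fin r))⁻¹ j))⁻¹) :=
    inv_val_of_val_eq u 1 uf huf0 hu
  refine ⟨σ, fun j => uf (σ j) * f j * (uf j)⁻¹, ?_, ?_, ?_, ?_⟩
  · intro j; exact mul_ne_zero (mul_ne_zero (huf0 _) (hf0 _)) (inv_ne_zero (huf0 _))
  · intro j
    rw [mul_pow, mul_pow, hun, hfn, inv_pow, hun, inv_one, mul_one, mul_one]
  · have hP : (∏ j, uf j) ≠ 0 := Finset.prod_ne_zero_iff.mpr fun j _ => huf0 j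
    rw [Finset.prod_mul_distrib, Finset.prod_mul_distrib, Equiv.prod_comp σ uf,
      Finset.prod_inv_distrib, mul_comm (∏ i, uf i) (∏ x, f x), mul_assoc,
      mul_inv_cancel₀ hP, mul_one]
    exact hfd
  · rw [Units.val_mul, Units.val_mul, hu, hAv, huinv, MonoM_mul, MonoM_mul]
    ext i j
    simp [MonoM_apply]

lemma tGL_inv_val : (((tGL d e r)⁻¹ : Matrix.GeneralLinearGroup (Fin r) ℂ) :
    Matrix (Fin r) (Fin r) ℂ) = MonoM 1 (fun j => (tf d e r j)⁻¹) := by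
  rw [inv_val_of_val_eq (tGL d e r) 1 (tf d e r) tf_ne_zero tGL_val]
  ext i j
  simp [MonoM_apply]

lemma tGL_mem_normalizer (hd : 1 ≤ d) (he : 1 ≤ e) :
    tGL d e r ∈ Subgroup.normalizer (Gdeer d e r : Set (Matrix.GeneralLinearGroup (Fin r) ℂ)) := by
  rw [Subgroup.mem_normalizer_iff]
  intro g
  constructor
  · intro hg
    rw [mem_Gdeer] at hg ⊢
    exact diag_conj_mem hd he _ _ tGL_val (tf_pow_n hd he) hg
  · intro hg
    rw [mem_Gdeer] at hg ⊢
    have hcond : ∀ j, (tf d e r j)⁻¹ ^ (d * e) = 1 := by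
      intro j; rw [inv_pow, tf_pow_n hd he, inv_one]
    have h2 := diag_conj_mem hd he (tGL d e r)⁻¹ _ tGL_inv_val hcond hg
    simpa [mul_assoc] using h2

open Fin.NatCast in
lemma const_of_rotate [NeZero r] {f : Fin r → ℂ}
    (hx : ∀ j, f (finRotate r j) = f j) : ∀ j, f j = f 0 := by
  have hr : 1 ≤ r := Nat.one_le_iff_ne_zero.mpr (NeZero.ne r)
  obtain ⟨m, rfl⟩ : ∃ m, r = m + 1 := ⟨r - 1, by omega⟩
  have key : ∀ k : ℕ, f (k : Fin (m+1)) = f 0 := by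
    intro k
    induction k with
    | zero => simp
    | succ k ih =>
        have hcast : ((k+1 : ℕ) : Fin (m+1)) = (k : Fin (m+1)) + 1 := by push_cast; ring
        rw [hcast, ← finRotate_succ_apply, hx, ih]
  intro j
  have := key j.val
  rwa [Fin.cast_val_eq_self] at this

lemma const_mul_comm (c0 : ℂ) (hc : c0 ≠ 0) {A : Matrix.GeneralLinearGroup (Fin r) ℂ}
    (hA : A ∈ monomialSet d e r) :
    monoGL 1 (fun _ => c0) (fun _ => hc) * A = A * monoGL 1 (fun _ => c0) (fun _ => hc) := by
  rw [mem_monomialSet_iff] at hA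
  obtain ⟨σ, f, hf0, _, _, hAv⟩ := hA
  apply Units.ext
  rw [Units.val_mul, Units.val_mul, monoGL_val, hAv, MonoM_mul, MonoM_mul]
  ext i j
  simp [MonoM_apply, mul_comm]

lemma cyc_mem_Gdeer (hd : 1 ≤ d) :
    monoGL (finRotate r) (fun _ => (1:ℂ)) (fun _ => one_ne_zero) ∈ Gdeer d e r := by
  rw [mem_Gdeer, mem_monomialSet_iff]
  exact ⟨finRotate r, fun _ => 1, fun _ => one_ne_zero, fun _ => one_pow _,
    by simp, monoGL_val _ _ _⟩

end Aux3


set_option maxHeartbeats 1600000 in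
/-- **Lemma 14 (Marin–Michel).** The matrix `t = Diag(ζ_{de},1,…,1)` normalizes
`G = G(de,e,r)`, and the automorphism `Ad tⁱ` of `G` is inner if and only if
`gcd(e,r) ∣ i`; consequently the image of `Ad t` in `Out(G)` has order `gcd(e,r)`. -/
theorem ad_t_pow_inner_iff
    (d e r : ℕ) (hd : 1 ≤ d) (he : 1 ≤ e) (hr : 1 ≤ r) :
    tGL d e r ∈ Subgroup.normalizer (Gdeer d e r : Set (Matrix.GeneralLinearGroup (Fin r) ℂ)) ∧
    ∀ i : ℕ,
      (∃ h ∈ Gdeer d e r, ∀ g ∈ Gdeer d e r,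
          (tGL d e r) ^ i * g * ((tGL d e r) ^ i)⁻¹ = h * g * h⁻¹)
        ↔ Nat.gcd e r ∣ i := by
  haveI : NeZero r := ⟨by omega⟩
  haveI : NeZero (d * e) := ⟨by positivity⟩
  have hprim := zed_prim hd he
  have hzne : zed d e ≠ 0 := Complex.exp_ne_zero _
  refine ⟨tGL_mem_normalizer hd he, fun i => ⟨?_, ?_⟩⟩
  · -- inner → gcd ∣ i
    rintro ⟨h, hhG, hconj⟩
    rw [mem_Gdeer, mem_monomialSet_iff] at hhG
    obtain ⟨σ, η, hη0, hηn, hηd, hval⟩ := hhG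
    set C : Matrix.GeneralLinearGroup (Fin r) ℂ :=
      monoGL (finRotate r) (fun _ => (1:ℂ)) (fun _ => one_ne_zero) with hC
    have h1 := hconj C (cyc_mem_Gdeer hd)
    have h2 : (h⁻¹ * tGL d e r ^ i) * C = C * (h⁻¹ * tGL d e r ^ i) := by
      calc (h⁻¹ * tGL d e r ^ i) * C
          = h⁻¹ * (tGL d e r ^ i * C * (tGL d e r ^ i)⁻¹) * tGL d e r ^ i := by group
        _ = h⁻¹ * (h * C * h⁻¹) * tGL d e r ^ i := by rw [h1]
        _ = C * (h⁻¹ * tGL d e r ^ i) := by group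
    set lf : Fin r → ℂ := fun j => (η (σ⁻¹ j))⁻¹ * tf d e r j ^ i with hlf
    have hlf0 : ∀ j, lf j ≠ 0 := fun j =>
      mul_ne_zero (inv_ne_zero (hη0 _)) (pow_ne_zero _ (tf_ne_zero _))
    have hwval : ((h⁻¹ : Matrix.GeneralLinearGroup (Fin r) ℂ) : Matrix (Fin r) (Fin r) ℂ)
        * ((tGL d e r ^ i : Matrix.GeneralLinearGroup (Fin r) ℂ) : Matrix (Fin r) (Fin r) ℂ)
        = MonoM σ⁻¹ lf := by
      rw [inv_val_of_val_eq h σ η hη0 hval, tGL_pow_val, MonoM_mul]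
      ext i' j
      simp [MonoM_apply, hlf]
    have h3 : MonoM (σ⁻¹ * finRotate r) (fun j => lf (finRotate r j) * 1)
        = MonoM (finRotate r * σ⁻¹) (fun j => 1 * lf j) := by
      have hv := congrArg Units.val h2
      simp only [Units.val_mul] at hv
      rw [hwval, hC, monoGL_val, MonoM_mul, MonoM_mul] at hv
      exact hv
    have h4 : ∀ j, lf (finRotate r j) = lf j := by
      intro j
      have := MonoM_entries_eq (fun j => mul_ne_zero (hlf0 _) one_ne_zero) h3 j
      simpa using this
    have h5 := const_of_rotate h4
    have htf0 : tf d e r 0 = zed d e := by simp [tf]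
    -- product identities
    have h6 : (∏ j, lf j) = (∏ j, η j)⁻¹ * zed d e ^ i := by
      rw [hlf, Finset.prod_mul_distrib, prod_tf_pow hr]
      congr 1
      rw [Equiv.prod_comp σ⁻¹ (fun j => (η j)⁻¹), Finset.prod_inv_distrib]
    have h6' : (∏ j, lf j) = lf 0 ^ r := by
      rw [Finset.prod_congr rfl (fun j _ => h5 j), Finset.prod_const, Finset.card_univ,
        Fintype.card_fin]
    obtain ⟨k, hklt, hk⟩ := hprim.eq_pow_of_pow_eq_one (hηn (σ⁻¹ 0))
    have h7 : ((zed d e ^ k)⁻¹ * zed d e ^ i) ^ r = (∏ j, η j)⁻¹ * zed d e ^ i := by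
      rw [← h6, h6']
      congr 1
      rw [hlf]
      simp only []
      rw [htf0, hk]
    have h8 := congrArg (· ^ d) h7
    beta_reduce at h8
    rw [← pow_mul, mul_pow, mul_pow, inv_pow, inv_pow, ← pow_mul, ← pow_mul, ← pow_mul] at h8
    rw [hηd, inv_one, one_mul] at h8
    -- h8 : (ζ^(k*(r*d)))⁻¹ * ζ^(i*(r*d)) = ζ^(i*d)
    have h9 : zed d e ^ (i * (r * d)) = zed d e ^ (k * (r * d) + i * d) := by
      rw [pow_add]
      field_simp at h8 ⊢
      linear_combination h8
    have h11 : ((d : ℤ) * e) ∣ ((k : ℤ) * (r * d) + i * d) - i * (r * d) := by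
      have hz1 : zed d e ^ (((k : ℤ) * (r * d) + i * d) - i * (r * d)) = 1 := by
        rw [zpow_sub₀ hzne,
          show ((k : ℤ) * (r * d) + i * d) = ((k * (r * d) + i * d : ℕ) : ℤ) by push_cast; ring,
          show ((i : ℤ) * (r * d)) = ((i * (r * d) : ℕ) : ℤ) by push_cast; ring,
          zpow_natCast, zpow_natCast, ← h9, div_self (pow_ne_zero _ hzne)]
      have hz2 := (hprim.zpow_eq_one_iff_dvd _).mp hz1
      exact_mod_cast hz2
    have h12 : (e : ℤ) ∣ ((k : ℤ) * r + i - i * r) := by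
      have heq : ((k : ℤ) * (r * d) + i * d) - i * (r * d)
          = (d : ℤ) * ((k : ℤ) * r + i - i * r) := by ring
      rw [heq] at h11
      exact (mul_dvd_mul_iff_left (by exact_mod_cast (by omega : d ≠ 0) : (d:ℤ) ≠ 0)).mp h11
    have hge : (Nat.gcd e r : ℤ) ∣ (e : ℤ) := Int.natCast_dvd_natCast.mpr (Nat.gcd_dvd_left e r)
    have hgr : (Nat.gcd e r : ℤ) ∣ (r : ℤ) := Int.natCast_dvd_natCast.mpr (Nat.gcd_dvd_right e r)
    have h13 : (Nat.gcd e r : ℤ) ∣ (i : ℤ) := by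
      have hX := hge.trans h12
      have : (i : ℤ) = ((k : ℤ) * r + i - i * r) - k * r + i * r := by ring
      rw [this]
      exact dvd_add (dvd_sub hX (Dvd.dvd.mul_left hgr k)) (Dvd.dvd.mul_left hgr i)
    exact_mod_cast h13
  · -- gcd ∣ i → inner
    intro hi
    obtain ⟨q, hq⟩ := hi
    obtain ⟨a, b, hab⟩ : ∃ a b : ℤ, (i : ℤ) = a * e + b * r := by
      refine ⟨(q : ℤ) * Nat.gcdA e r, (q : ℤ) * Nat.gcdB e r, ?_⟩
      have hi' : (i : ℤ) = (Nat.gcd e r : ℤ) * q := by exact_mod_cast hq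
      rw [hi', Nat.gcd_eq_gcd_ab e r]
      ring
    set c0 : ℂ := zed d e ^ (-b) with hc0def
    have hc0 : c0 ≠ 0 := zpow_ne_zero _ hzne
    set cU : Matrix.GeneralLinearGroup (Fin r) ℂ := monoGL 1 (fun _ => c0) (fun _ => hc0)
      with hcU
    have hzd : ∀ m : ℤ, ((d : ℤ) * e) ∣ m → zed d e ^ m = 1 := by
      intro m hm
      rw [hprim.zpow_eq_one_iff_dvd m]
      exact_mod_cast hm
    have hpowm : ∀ m : ℤ, (zed d e ^ m) ^ (d * e) = 1 := by
      intro m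
      rw [← zpow_natCast (zed d e ^ m) (d * e), ← zpow_mul]
      exact hzd _ ⟨m, by push_cast; ring⟩
    have hUmem : cU * tGL d e r ^ i ∈ Gdeer d e r := by
      rw [mem_Gdeer, mem_monomialSet_iff]
      refine ⟨1, fun j => c0 * tf d e r j ^ i, fun j => mul_ne_zero hc0
        (pow_ne_zero _ (tf_ne_zero _)), ?_, ?_, ?_⟩
      · intro j
        rw [mul_pow, hc0def, hpowm, one_mul, ← pow_mul, mul_comm i (d*e), pow_mul,
          tf_pow_n hd he, one_pow]
      · rw [Finset.prod_mul_distrib, Finset.prod_const, Finset.card_univ, Fintype.card_fin,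
          prod_tf_pow hr]
        have hstep : c0 ^ r * zed d e ^ i = zed d e ^ (a * e) := by
          rw [hc0def, ← zpow_natCast (zed d e ^ (-b)) r, ← zpow_mul,
            ← zpow_natCast (zed d e) i, ← zpow_add₀ hzne]
          congr 1
          linear_combination hab
        rw [hstep, ← zpow_natCast (zed d e ^ (a * e)) d, ← zpow_mul]
        exact hzd _ ⟨a, by ring⟩
      · rw [Units.val_mul, hcU, monoGL_val, tGL_pow_val, MonoM_mul]
        ext i' j
        simp [MonoM_apply]
    refine ⟨cU * tGL d e r ^ i, hUmem, ?_⟩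
    intro g hg
    have hX : tGL d e r ^ i * g * (tGL d e r ^ i)⁻¹ ∈ monomialSet d e r := by
      refine diag_conj_mem hd he (tGL d e r ^ i) _ (tGL_pow_val i) ?_ (mem_Gdeer.mp hg)
      intro j
      rw [← pow_mul, mul_comm i (d * e), pow_mul, tf_pow_n hd he, one_pow]
    have hcomm := const_mul_comm c0 hc0 hX
    have hfix : cU * (tGL d e r ^ i * g * (tGL d e r ^ i)⁻¹) * cU⁻¹
        = tGL d e r ^ i * g * (tGL d e r ^ i)⁻¹ := by
      rw [hcU, hcomm, mul_inv_cancel_right]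
    calc tGL d e r ^ i * g * (tGL d e r ^ i)⁻¹
        = cU * (tGL d e r ^ i * g * (tGL d e r ^ i)⁻¹) * cU⁻¹ := hfix.symm
      _ = (cU * tGL d e r ^ i) * g * (cU * tGL d e r ^ i)⁻¹ := by group
end

section
/- Let G be a finite quasi-indecomposable group. Then G admits a direct product decomposition G = Z × Ĝ where Z ⊆ Z(G) and Ĝ is either trivial or a non-abelian indecomposable group; and in any two such decompositions the factors Z, respectively Ĝ, are isomorphic (so the central factor and the non-abelian factor of G are unique up to isomorphism). -/
/-- Two subgroups give an (internal) direct product decomposition of `H`. -/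
def IsInternalDirectProd {H : Type*} [Group H] (A B : Subgroup H) : Prop :=
  (∀ a ∈ A, ∀ b ∈ B, a * b = b * a) ∧ A ⊓ B = ⊥ ∧ A ⊔ B = ⊤

/-- A group is indecomposable if it admits no non-trivial direct product decomposition. -/
def IndecomposableGroup (H : Type*) [Group H] : Prop :=
  ∀ A B : Subgroup H, IsInternalDirectProd A B → A = ⊥ ∨ B = ⊥

/-- A group is quasi-indecomposable if in any direct product decomposition one of the two
factors is central. -/
def QuasiIndecomposable (H : Type*) [Group H] : Prop :=
  ∀ A B : Subgroup H, IsInternalDirectProd A B →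
    A ≤ Subgroup.center H ∨ B ≤ Subgroup.center H

/-- A decomposition `H = Z × Ĥ` with `Z` central and `Ĥ` trivial or indecomposable
non-abelian. -/
def IsCanonicalDecomp {H : Type*} [Group H] (Z Hhat : Subgroup H) : Prop :=
  IsInternalDirectProd Z Hhat ∧ Z ≤ Subgroup.center H ∧
    (Hhat = ⊥ ∨ ((¬ ∀ a ∈ Hhat, ∀ b ∈ Hhat, a * b = b * a) ∧ IndecomposableGroup ↥Hhat))

namespace QIP

variable {H : Type*} [Group H] {A B : Subgroup H}

theorem IIDP.symm (h : IsInternalDirectProd A B) : IsInternalDirectProd B A :=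
  ⟨fun b hb a ha => (h.1 a ha b hb).symm, by rw [inf_comm, h.2.1], by rw [sup_comm, h.2.2]⟩

theorem exists_decomp (h : IsInternalDirectProd A B) (g : H) :
    ∃ a ∈ A, ∃ b ∈ B, g = a * b := by
  let S : Subgroup H :=
    { carrier := {x | ∃ a ∈ A, ∃ b ∈ B, x = a * b}
      one_mem' := ⟨1, one_mem _, 1, one_mem _, (one_mul 1).symm⟩
      mul_mem' := by
        rintro x y ⟨a, ha, b, hb, rfl⟩ ⟨a', ha', b', hb', rfl⟩
        exact ⟨a * a', mul_mem ha ha', b * b', mul_mem hb hb', by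
          rw [mul_assoc, ← mul_assoc b a' b', ← h.1 a' ha' b hb, mul_assoc, ← mul_assoc,
            ← mul_assoc]⟩
      inv_mem' := by
        rintro x ⟨a, ha, b, hb, rfl⟩
        exact ⟨a⁻¹, inv_mem ha, b⁻¹, inv_mem hb, by
          rw [mul_inv_rev, h.1 a⁻¹ (inv_mem ha) b⁻¹ (inv_mem hb)]⟩ }
  have hA : A ≤ S := fun a ha => ⟨a, ha, 1, one_mem _, (mul_one a).symm⟩
  have hB : B ≤ S := fun b hb => ⟨1, one_mem _, b, hb, (one_mul b).symm⟩
  have : A ⊔ B ≤ S := sup_le hA hB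
  exact this (h.2.2 ▸ Subgroup.mem_top g)

theorem eq_one_of_mem_inf (h : IsInternalDirectProd A B) {x : H} (hxA : x ∈ A) (hxB : x ∈ B) :
    x = 1 := by
  have : x ∈ A ⊓ B := ⟨hxA, hxB⟩
  rwa [h.2.1, Subgroup.mem_bot] at this

/-- The multiplication map `A × B →* H`. -/
def mulHom (h : IsInternalDirectProd A B) : (A × B) →* H :=
  MonoidHom.mk' (fun p => (p.1 : H) * (p.2 : H)) (by
    rintro ⟨a, b⟩ ⟨a', b'⟩
    simp only [Prod.fst_mul, Prod.snd_mul, Subgroup.coe_mul]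
    rw [mul_assoc (a : H) (a' : H), ← mul_assoc (a' : H) (b : H) (b' : H), h.1 a' a'.2 b b.2, mul_assoc (b : H),
      ← mul_assoc])

theorem mulHom_bijective (h : IsInternalDirectProd A B) : Function.Bijective (mulHom h) := by
  constructor
  · rw [← MonoidHom.ker_eq_bot_iff, Subgroup.eq_bot_iff_forall]
    rintro ⟨a, b⟩ hx
    have hab : (a : H) * b = 1 := hx
    have hmem : (a : H) = (b : H)⁻¹ := by rw [eq_inv_iff_mul_eq_one]; exact hab
    have : (a : H) = 1 := eq_one_of_mem_inf h a.2 (hmem ▸ inv_mem b.2)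
    have hb : (b : H) = 1 := by rw [hmem] at this; simpa using this
    simp only [Prod.ext_iff]
    exact ⟨Subtype.ext this, Subtype.ext hb⟩
  · intro g
    obtain ⟨a, ha, b, hb, rfl⟩ := exists_decomp h g
    exact ⟨(⟨a, ha⟩, ⟨b, hb⟩), rfl⟩

/-- The isomorphism `A × B ≃* H`. -/
noncomputable def mulEquiv (h : IsInternalDirectProd A B) : (A × B) ≃* H :=
  MulEquiv.ofBijective (mulHom h) (mulHom_bijective h)

/-- Projection to `A`. -/
noncomputable def projL (h : IsInternalDirectProd A B) : H →* A :=
  (MonoidHom.fst A B).comp (mulEquiv h).symm.toMonoidHom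

/-- Projection to `B`. -/
noncomputable def projR (h : IsInternalDirectProd A B) : H →* B :=
  (MonoidHom.snd A B).comp (mulEquiv h).symm.toMonoidHom

theorem proj_spec (h : IsInternalDirectProd A B) (g : H) :
    (projL h g : H) * (projR h g : H) = g := by
  have h1 := (mulEquiv h).apply_symm_apply g
  have h2 : ∀ p : A × B, mulEquiv h p = (p.1 : H) * (p.2 : H) := fun p => rfl
  rw [h2] at h1
  exact h1

theorem projL_eq (h : IsInternalDirectProd A B) (a : A) : projL h (a : H) = a := by
  have : mulEquiv h (a, 1) = (a : H) := by simp [mulEquiv, mulHom]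
  have h2 : (mulEquiv h).symm (a : H) = (a, 1) := by rw [← this, MulEquiv.symm_apply_apply]
  simp [projL, h2]

theorem projR_eq_one (h : IsInternalDirectProd A B) (a : A) : projR h (a : H) = 1 := by
  have : mulEquiv h (a, 1) = (a : H) := by simp [mulEquiv, mulHom]
  have h2 : (mulEquiv h).symm (a : H) = (a, 1) := by rw [← this, MulEquiv.symm_apply_apply]
  simp [projR, h2]

theorem projR_eq (h : IsInternalDirectProd A B) (b : B) : projR h (b : H) = b := by
  have : mulEquiv h (1, b) = (b : H) := by simp [mulEquiv, mulHom]
  have h2 : (mulEquiv h).symm (b : H) = (1, b) := by rw [← this, MulEquiv.symm_apply_apply]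
  simp [projR, h2]

theorem projL_eq_one (h : IsInternalDirectProd A B) (b : B) : projL h (b : H) = 1 := by
  have : mulEquiv h (1, b) = (b : H) := by simp [mulEquiv, mulHom]
  have h2 : (mulEquiv h).symm (b : H) = (1, b) := by rw [← this, MulEquiv.symm_apply_apply]
  simp [projL, h2]

theorem mem_left_of_projR_eq_one (h : IsInternalDirectProd A B) {g : H}
    (hg : projR h g = 1) : g ∈ A := by
  have := proj_spec h g
  rw [hg] at this
  simp only [OneMemClass.coe_one, mul_one] at this
  exact this ▸ (projL h g).2

theorem card_eq (h : IsInternalDirectProd A B) :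
    Nat.card H = Nat.card A * Nat.card B := by
  rw [← Nat.card_prod]
  exact (Nat.card_congr (mulEquiv h).toEquiv).symm

end QIP

section T2
variable {G G' : Type*} [Group G] [Group G']

open QIP

theorem IIDP.map (e : G ≃* G') {A B : Subgroup G} (h : IsInternalDirectProd A B) :
    IsInternalDirectProd (A.map e.toMonoidHom) (B.map e.toMonoidHom) := by
  refine ⟨?_, ?_, ?_⟩
  · rintro _ ⟨a, ha, rfl⟩ _ ⟨b, hb, rfl⟩
    simp only [MulEquiv.coe_toMonoidHom]
    rw [← map_mul, ← map_mul, h.1 a ha b hb]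
  · rw [← Subgroup.map_inf _ _ _ e.injective, h.2.1, Subgroup.map_bot]
  · rw [← Subgroup.map_sup, h.2.2, Subgroup.map_top_of_surjective _ e.surjective]

theorem Indec.of_mulEquiv (e : G ≃* G') (h : IndecomposableGroup G) :
    IndecomposableGroup G' := by
  intro A B hAB
  have := h (A.map e.symm.toMonoidHom) (B.map e.symm.toMonoidHom) (IIDP.map e.symm hAB)
  have hker : MonoidHom.ker e.symm.toMonoidHom = ⊥ :=
    (MonoidHom.ker_eq_bot_iff _).mpr e.symm.injective
  rcases this with h1 | h1
  · exact Or.inl (le_bot_iff.mp (hker ▸ (Subgroup.map_eq_bot_iff _).mp h1))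
  · exact Or.inr (le_bot_iff.mp (hker ▸ (Subgroup.map_eq_bot_iff _).mp h1))

end T2

section CenterComm
variable {G : Type*} [Group G]

theorem center_comm {x : G} (hx : x ∈ Subgroup.center G) (y : G) : x * y = y * x :=
  ((Subgroup.mem_center_iff.mp hx) y).symm

end CenterComm

section Fitting
variable {G : Type*} [Group G] [Finite G]

theorem fitting_injective (hind : IndecomposableGroup G)
    (hna : ¬ ∀ a b : G, a * b = b * a)
    (c : G →* G) (hc : ∀ g, c g ∈ Subgroup.center G) :
    Function.Injective (fun g : G => g * (c g)⁻¹) := by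
  -- the endomorphism θ
  set θ : Monoid.End G := MonoidHom.mk' (fun g : G => g * (c g)⁻¹) (by
    intro g h
    show g * h * (c (g * h))⁻¹ = g * (c g)⁻¹ * (h * (c h)⁻¹)
    rw [map_mul, mul_inv_rev]
    conv_rhs => rw [mul_assoc, center_comm (inv_mem (hc g)) (h * (c h)⁻¹)]
    group) with hθdef
  have hθ : ∀ g : G, θ g = g * (c g)⁻¹ := fun g => rfl
  -- θ is a normal endomorphism
  have hnorm : ∀ g x : G, θ (g * x * g⁻¹) = g * θ x * g⁻¹ := by
    intro g x
    rw [hθ, hθ, map_mul, map_mul, mul_inv_rev, mul_inv_rev, map_inv]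
    have h1 : c g * c x * (c g)⁻¹ = c x := by
      rw [center_comm (hc g) (c x)]; group
    calc g * x * g⁻¹ * ((c g)⁻¹⁻¹ * ((c x)⁻¹ * (c g)⁻¹))
        = g * x * g⁻¹ * (c g * c x * (c g)⁻¹)⁻¹ := by group
      _ = g * x * g⁻¹ * (c x)⁻¹ := by rw [h1]
      _ = g * (x * (c x)⁻¹) * g⁻¹ := by
          conv_rhs => rw [← mul_assoc, mul_assoc (g * x), center_comm (inv_mem (hc x)) g⁻¹,
            ← mul_assoc]
  have hpow_succ : ∀ (n : ℕ) (x : G), (θ ^ (n + 1)) x = (θ ^ n) (θ x) := by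
    intro n x; rw [pow_succ]; rfl
  have hpow_succ' : ∀ (n : ℕ) (x : G), (θ ^ (n + 1)) x = θ ((θ ^ n) x) := by
    intro n x; rw [pow_succ']; rfl
  -- θ^n is a normal endomorphism
  have hnormn : ∀ (n : ℕ) (g x : G), (θ ^ n) (g * x * g⁻¹) = g * (θ ^ n) x * g⁻¹ := by
    intro n
    induction n with
    | zero => intro g x; rfl
    | succ n ih => intro g x; rw [hpow_succ', ih, hnorm, hpow_succ']
  -- θ^n shifts by central elements
  have hcent : ∀ (n : ℕ) (g : G), (θ ^ n) g * g⁻¹ ∈ Subgroup.center G := by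
    intro n
    induction n with
    | zero => intro g; simpa using one_mem _
    | succ n ih =>
      intro g
      have h1 : (θ ^ (n + 1)) g * g⁻¹
          = ((θ ^ n) g * g⁻¹) * (g * (c ((θ ^ n) g))⁻¹ * g⁻¹) := by
        rw [hpow_succ', hθ]; group
      rw [h1]
      refine mul_mem (ih g) ?_
      have := hc ((θ ^ n) g)
      have h2 : g * (c ((θ ^ n) g))⁻¹ * g⁻¹ = (c ((θ ^ n) g))⁻¹ := by
        rw [mul_assoc, center_comm (inv_mem this) g⁻¹]
        group
      rw [h2]; exact inv_mem this
  -- kernel and range chains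
  have hker_step : ∀ k : ℕ, MonoidHom.ker (θ ^ k) ≤ MonoidHom.ker (θ ^ (k + 1)) := by
    intro k x hx
    have hx' : (θ ^ k) x = 1 := hx
    show (θ ^ (k + 1)) x = 1
    rw [hpow_succ', hx', map_one]
  have hker_mono : ∀ a b : ℕ, a ≤ b → MonoidHom.ker (θ ^ a) ≤ MonoidHom.ker (θ ^ b) := by
    intro a b hab
    induction b, hab using Nat.le_induction with
    | base => exact le_rfl
    | succ b hb ih => exact ih.trans (hker_step b)
  have hrange_step : ∀ k : ℕ, MonoidHom.range (θ ^ (k + 1)) ≤ MonoidHom.range (θ ^ k) := by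
    rintro k _ ⟨x, rfl⟩
    exact ⟨θ x, (hpow_succ k x).symm⟩
  -- pigeonhole: find a repeated (ker, range) pair
  have hfin : Finite (Subgroup G) := Finite.of_injective _ SetLike.coe_injective
  obtain ⟨a, b, hne, heq⟩ := Finite.exists_ne_map_eq_of_infinite
    (fun k : ℕ => (MonoidHom.ker (θ ^ k), MonoidHom.range (θ ^ k)))
  have hkr : ∃ m k : ℕ, m < k ∧ MonoidHom.ker (θ ^ m) = MonoidHom.ker (θ ^ k) ∧
      MonoidHom.range (θ ^ m) = MonoidHom.range (θ ^ k) := by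
    rcases lt_or_gt_of_ne hne with h | h
    · exact ⟨a, b, h, congrArg Prod.fst heq, congrArg Prod.snd heq⟩
    · exact ⟨b, a, h, (congrArg Prod.fst heq).symm, (congrArg Prod.snd heq).symm⟩
  obtain ⟨m, k, hmk, hkereq, hrangeeq⟩ := hkr
  -- consecutive stabilization at m
  have hkstab : MonoidHom.ker (θ ^ m) = MonoidHom.ker (θ ^ (m + 1)) :=
    le_antisymm (hker_step m) ((hker_mono (m + 1) k hmk).trans_eq hkereq.symm)
  have hrstab : MonoidHom.range (θ ^ m) = MonoidHom.range (θ ^ (m + 1)) := by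
    refine le_antisymm ?_ (hrange_step m)
    have : MonoidHom.range (θ ^ k) ≤ MonoidHom.range (θ ^ (m + 1)) := by
      have hmono : ∀ a b : ℕ, a ≤ b → MonoidHom.range (θ ^ b) ≤ MonoidHom.range (θ ^ a) := by
        intro a b hab
        induction b, hab using Nat.le_induction with
        | base => exact le_rfl
        | succ b hb ih => exact (hrange_step b).trans ih
      exact hmono (m + 1) k hmk
    exact hrangeeq.le.trans this
  -- propagate consecutive stabilization upwards
  have hker_prop : ∀ j, m ≤ j → MonoidHom.ker (θ ^ j) = MonoidHom.ker (θ ^ (j + 1)) := by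
    intro j hj
    induction j, hj using Nat.le_induction with
    | base => exact hkstab
    | succ j hj ih =>
      refine le_antisymm (hker_step _) ?_
      intro x hx
      have hx' : (θ ^ (j + 1)) (θ x) = 1 := by
        rw [← hpow_succ]; exact hx
      have h2 : θ x ∈ MonoidHom.ker (θ ^ (j + 1)) := hx'
      rw [← ih] at h2
      show (θ ^ (j + 1)) x = 1
      rw [hpow_succ]
      exact h2
  have hrange_prop : ∀ j, m ≤ j → MonoidHom.range (θ ^ j) = MonoidHom.range (θ ^ (j + 1)) := by
    intro j hj
    induction j, hj using Nat.le_induction with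
    | base => exact hrstab
    | succ j hj ih =>
      refine le_antisymm ?_ (hrange_step _)
      rintro _ ⟨x, rfl⟩
      have h1 : (θ ^ j) x ∈ MonoidHom.range (θ ^ (j + 1)) := by
        rw [← ih]; exact ⟨x, rfl⟩
      obtain ⟨z, hz⟩ := h1
      refine ⟨z, ?_⟩
      show (θ ^ (j + 1 + 1)) z = (θ ^ (j + 1)) x
      rw [hpow_succ' (j + 1) z, show (θ ^ (j + 1)) z = (θ ^ j) x from hz, ← hpow_succ']
  have hker_all : ∀ j, m ≤ j → MonoidHom.ker (θ ^ j) = MonoidHom.ker (θ ^ m) := by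
    intro j hj
    induction j, hj using Nat.le_induction with
    | base => rfl
    | succ j hj ih => rw [← hker_prop j hj, ih]
  have hrange_all : ∀ j, m ≤ j → MonoidHom.range (θ ^ j) = MonoidHom.range (θ ^ m) := by
    intro j hj
    induction j, hj using Nat.le_induction with
    | base => rfl
    | succ j hj ih => rw [← hrange_prop j hj, ih]
  set n := m + 1 with hn
  have hkn : MonoidHom.ker (θ ^ n) = MonoidHom.ker (θ ^ (n + n)) := by
    rw [hker_all n (by omega), hker_all (n + n) (by omega)]
  have hrn : MonoidHom.range (θ ^ n) = MonoidHom.range (θ ^ (n + n)) := by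
    rw [hrange_all n (by omega), hrange_all (n + n) (by omega)]
  set K := MonoidHom.ker (θ ^ n) with hKdef
  set I := MonoidHom.range (θ ^ n) with hIdef
  have hpow_add : ∀ x : G, (θ ^ (n + n)) x = (θ ^ n) ((θ ^ n) x) := by
    intro x; rw [pow_add]; rfl
  have hKnormal : K.Normal := MonoidHom.normal_ker _
  have hInormal : I.Normal := by
    constructor
    rintro _ ⟨x, rfl⟩ g
    exact ⟨g * x * g⁻¹, hnormn n g x⟩
  have hinf : K ⊓ I = ⊥ := by
    rw [Subgroup.eq_bot_iff_forall]
    rintro x ⟨hxK, hxI⟩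
    obtain ⟨y, rfl⟩ := hxI
    have hy1 : (θ ^ n) ((θ ^ n) y) = 1 := hxK
    have : y ∈ MonoidHom.ker (θ ^ (n + n)) := by
      show (θ ^ (n + n)) y = 1
      rw [hpow_add]; exact hy1
    rw [← hkn] at this
    exact this
  have hsup : K ⊔ I = ⊤ := by
    rw [eq_top_iff]
    intro g _
    have h1 : (θ ^ n) g ∈ MonoidHom.range (θ ^ (n + n)) := by
      rw [← hrn]; exact ⟨g, rfl⟩
    obtain ⟨y, hy⟩ := h1
    have h2 : (θ ^ n) ((θ ^ n) y) = (θ ^ n) g := by rw [← hpow_add]; exact hy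
    have hk : g * ((θ ^ n) y)⁻¹ ∈ K := by
      show (θ ^ n) (g * ((θ ^ n) y)⁻¹) = 1
      rw [map_mul, map_inv, h2]
      group
    have hgdecomp : g = g * ((θ ^ n) y)⁻¹ * (θ ^ n) y := by group
    rw [hgdecomp]
    exact Subgroup.mul_mem _ (Subgroup.mem_sup_left hk) (Subgroup.mem_sup_right ⟨y, rfl⟩)
  have hcomm : ∀ a ∈ K, ∀ b ∈ I, a * b = b * a := by
    intro a ha b hb
    exact Subgroup.commute_of_normal_of_disjoint K I hKnormal hInormal
      (by rw [disjoint_iff, hinf]) a b ha hb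
  rcases hind K I ⟨hcomm, hinf, hsup⟩ with hK | hI
  · -- θ is injective
    intro x y hxy
    have hth : θ x = θ y := hxy
    have hker1 : MonoidHom.ker θ ≤ K := by
      have h1 : MonoidHom.ker θ ≤ MonoidHom.ker (θ ^ 1) := fun x hx => by
        show (θ ^ 1) x = 1; rw [pow_one]; exact hx
      exact h1.trans (hker_mono 1 n (by omega))
    have hx : x * y⁻¹ ∈ MonoidHom.ker θ := by
      show θ (x * y⁻¹) = 1
      rw [map_mul, map_inv, hth]
      group
    have := hker1 hx
    rw [hK, Subgroup.mem_bot] at this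
    exact mul_inv_eq_one.mp this
  · exfalso
    apply hna
    intro x y
    have hcx : x ∈ Subgroup.center G := by
      have h1 : (θ ^ n) x = 1 := by
        have h2 : (θ ^ n) x ∈ I := ⟨x, rfl⟩
        rw [hI, Subgroup.mem_bot] at h2
        exact h2
      have h3 := hcent n x
      rw [h1, one_mul] at h3
      simpa using inv_mem h3
    exact center_comm hcx y

end Fitting

section Uniq
open QIP
variable {H : Type*} [Group H]

/-- The composite of the two cross projections is a central shift. -/
theorem key_comp {ZA HA ZB HB : Subgroup H} (dpA : IsInternalDirectProd ZA HA)
    (dpB : IsInternalDirectProd ZB HB)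
    (hZA : ZA ≤ Subgroup.center H) (hZB : ZB ≤ Subgroup.center H) :
    ∃ c : ↥HA →* ↥HA, (∀ g, c g ∈ Subgroup.center ↥HA) ∧
      ∀ h : ↥HA, projR dpA ((projR dpB ((h : H)) : H)) = h * (c h)⁻¹ := by
  refine ⟨(projR dpA).comp (ZB.subtype.comp ((projL dpB).comp HA.subtype)), ?_, ?_⟩
  · intro g
    -- the value is central in H, hence in HA
    have hcen : ((projR dpA ((projL dpB ((g : H)) : H) : H)) : H) ∈ Subgroup.center H := by
      set z : ↥ZB := projL dpB ((g : H)) with hz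
      have : ((projR dpA ((z : H))) : H) = ((projL dpA ((z : H)) : H))⁻¹ * (z : H) :=
        eq_inv_mul_iff_mul_eq.mpr (proj_spec dpA (z : H))
      rw [this]
      exact mul_mem (inv_mem (hZA (projL dpA ((z : H))).2)) (hZB z.2)
    rw [Subgroup.mem_center_iff]
    intro k
    ext
    exact (center_comm hcen (k : H)).symm
  · intro h
    set z : ↥ZB := projL dpB ((h : H)) with hz
    set a : ↥HB := projR dpB ((h : H)) with ha
    have hspec : (z : H) * (a : H) = (h : H) := proj_spec dpB (h : H)
    have ha' : (a : H) = (z : H)⁻¹ * (h : H) := eq_inv_mul_iff_mul_eq.mpr hspec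
    have h1 : projR dpA ((a : H)) = (projR dpA ((z : H)))⁻¹ * projR dpA ((h : H)) := by
      rw [ha', map_mul, map_inv]
    have h2 : projR dpA ((h : H)) = h := projR_eq dpA h
    have hcenc : (projR dpA ((z : H))) ∈ Subgroup.center ↥HA := by
      have hcen : ((projR dpA ((z : H))) : H) ∈ Subgroup.center H := by
        have : ((projR dpA ((z : H))) : H) = ((projL dpA ((z : H)) : H))⁻¹ * (z : H) :=
          eq_inv_mul_iff_mul_eq.mpr (proj_spec dpA (z : H))
        rw [this]
        exact mul_mem (inv_mem (hZA (projL dpA ((z : H))).2)) (hZB z.2)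
      rw [Subgroup.mem_center_iff]
      intro k
      ext
      exact (center_comm hcen (k : H)).symm
    rw [h1, h2]
    have heq : projR dpA ((z : H)) = (projR dpA).comp (ZB.subtype.comp ((projL dpB).comp HA.subtype)) h := rfl
    rw [← heq]
    exact center_comm (inv_mem hcenc) h

variable [Finite H]

theorem cross_proj_injective {ZA HA ZB HB : Subgroup H} (dpA : IsInternalDirectProd ZA HA)
    (dpB : IsInternalDirectProd ZB HB)
    (hZA : ZA ≤ Subgroup.center H) (hZB : ZB ≤ Subgroup.center H)
    (hna : ¬ ∀ a ∈ HA, ∀ b ∈ HA, a * b = b * a) (hind : IndecomposableGroup ↥HA) :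
    Function.Injective (fun h : ↥HA => projR dpB ((h : H))) := by
  obtain ⟨c, hc, hkey⟩ := key_comp dpA dpB hZA hZB
  have hna' : ¬ ∀ a b : ↥HA, a * b = b * a := by
    intro hab
    exact hna (fun x hx y hy => congrArg Subtype.val (hab ⟨x, hx⟩ ⟨y, hy⟩))
  have hinj := fitting_injective hind hna' c hc
  intro x y hxy
  have h1 : projR dpA ((projR dpB ((x : H)) : H)) = projR dpA ((projR dpB ((y : H)) : H)) := by
    simp only at hxy
    rw [hxy]
  rw [hkey, hkey] at h1
  exact hinj h1

theorem canonical_unique (Z₁ H₁ Z₂ H₂ : Subgroup H)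
    (c₁ : IsCanonicalDecomp Z₁ H₁) (c₂ : IsCanonicalDecomp Z₂ H₂) :
    Nonempty (↥Z₁ ≃* ↥Z₂) ∧ Nonempty (↥H₁ ≃* ↥H₂) := by
  obtain ⟨dp₁, hZ₁, hc₁⟩ := c₁
  obtain ⟨dp₂, hZ₂, hc₂⟩ := c₂
  -- degenerate cases
  by_cases habel : ∀ a b : H, a * b = b * a
  · have hb₁ : H₁ = ⊥ := by
      rcases hc₁ with h | ⟨hna, _⟩
      · exact h
      · exact absurd (fun a _ b _ => habel a b) hna
    have hb₂ : H₂ = ⊥ := by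
      rcases hc₂ with h | ⟨hna, _⟩
      · exact h
      · exact absurd (fun a _ b _ => habel a b) hna
    have ht₁ : Z₁ = ⊤ := by have := dp₁.2.2; rwa [hb₁, sup_bot_eq] at this
    have ht₂ : Z₂ = ⊤ := by have := dp₂.2.2; rwa [hb₂, sup_bot_eq] at this
    exact ⟨⟨MulEquiv.subgroupCongr (ht₁.trans ht₂.symm)⟩,
      ⟨MulEquiv.subgroupCongr (hb₁.trans hb₂.symm)⟩⟩
  · -- H is non-abelian; both hat factors are non-abelian indecomposable
    have hnabel : ∀ (Z Hh : Subgroup H), IsInternalDirectProd Z Hh → Z ≤ Subgroup.center H →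
        Hh ≠ ⊥ := by
      intro Z Hh dp hZ hb
      apply habel
      have ht : Z = ⊤ := by have := dp.2.2; rwa [hb, sup_bot_eq] at this
      intro a b
      exact center_comm (hZ (ht ▸ Subgroup.mem_top a)) b
    have hc₁' : (¬ ∀ a ∈ H₁, ∀ b ∈ H₁, a * b = b * a) ∧ IndecomposableGroup ↥H₁ :=
      hc₁.resolve_left (hnabel Z₁ H₁ dp₁ hZ₁)
    have hc₂' : (¬ ∀ a ∈ H₂, ∀ b ∈ H₂, a * b = b * a) ∧ IndecomposableGroup ↥H₂ :=
      hc₂.resolve_left (hnabel Z₂ H₂ dp₂ hZ₂)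
    have injψ := cross_proj_injective dp₁ dp₂ hZ₁ hZ₂ hc₁'.1 hc₁'.2
    have injφ := cross_proj_injective dp₂ dp₁ hZ₂ hZ₁ hc₂'.1 hc₂'.2
    have hcardH : Nat.card ↥H₁ = Nat.card ↥H₂ :=
      le_antisymm (Nat.card_le_card_of_injective _ injψ) (Nat.card_le_card_of_injective _ injφ)
    have hψbij : Function.Bijective ((projR dp₂).comp H₁.subtype) := by
      rw [Nat.bijective_iff_injective_and_card]
      exact ⟨injψ, hcardH⟩
    refine ⟨?_, ⟨MulEquiv.ofBijective _ hψbij⟩⟩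
    -- the central factors
    have injρ : Function.Injective ((projL dp₂).comp Z₁.subtype) := by
      rw [← MonoidHom.ker_eq_bot_iff, Subgroup.eq_bot_iff_forall]
      intro z hz
      have hz' : projL dp₂ ((z : H)) = 1 := hz
      have hmem : (z : H) ∈ H₂ := by
        have := proj_spec dp₂ (z : H)
        rw [hz'] at this
        simp only [OneMemClass.coe_one, one_mul] at this
        exact this ▸ (projR dp₂ ((z : H))).2
      have h1 : projR dp₁ (((⟨(z : H), hmem⟩ : ↥H₂) : H)) = projR dp₁ (((1 : ↥H₂) : H)) := by
        have e1 : projR dp₁ ((z : H)) = 1 := projR_eq_one dp₁ z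
        simpa using e1
      have := injφ h1
      have hz1 : (z : H) = 1 := congrArg Subtype.val this
      exact Subtype.ext hz1
    have hcardZ : Nat.card ↥Z₁ = Nat.card ↥Z₂ := by
      have h1 := card_eq dp₁
      have h2 := card_eq dp₂
      rw [hcardH] at h1
      have hpos : 0 < Nat.card ↥H₂ := Nat.card_pos
      exact Nat.eq_of_mul_eq_mul_right hpos (by rw [← h1, ← h2])
    have hρbij : Function.Bijective ((projL dp₂).comp Z₁.subtype) := by
      rw [Nat.bijective_iff_injective_and_card]
      exact ⟨injρ, hcardZ⟩
    exact ⟨MulEquiv.ofBijective _ hρbij⟩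

end Uniq

section Exist
open QIP



variable {K : Type*} [Group K]

theorem central_normal {A : Subgroup K} (hA : A ≤ Subgroup.center K) : A.Normal := by
  constructor
  intro x hx g
  have : g * x * g⁻¹ = x := by rw [← center_comm (hA hx) g, mul_inv_cancel_right]
  rwa [this]

theorem lift_dp {A B : Subgroup K} (dp : IsInternalDirectProd A B)
    (hA : A ≤ Subgroup.center K) {A' B' : Subgroup ↥B}
    (dp' : IsInternalDirectProd A' B') :
    IsInternalDirectProd (A ⊔ A'.map B.subtype) (B'.map B.subtype) := by
  have hAn : A.Normal := central_normal hA
  have hdecomp : ∀ x ∈ A ⊔ A'.map B.subtype, ∃ a ∈ A, ∃ y ∈ A'.map B.subtype, a * y = x := by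
    intro x hx
    rw [← SetLike.mem_coe, Subgroup.normal_mul] at hx
    exact Set.mem_mul.mp hx
  refine ⟨?_, ?_, ?_⟩
  · intro x hx y hy
    obtain ⟨a, ha, z, hz, rfl⟩ := hdecomp x hx
    obtain ⟨z', hz', rfl⟩ := hz
    obtain ⟨y', hy', rfl⟩ := hy
    have hzy : (z' : K) * (y' : K) = (y' : K) * (z' : K) :=
      congrArg Subtype.val (dp'.1 z' hz' y' hy')
    have hac : ∀ w : K, a * w = w * a := fun w => center_comm (hA ha) w
    calc a * (z' : K) * (y' : K) = a * ((z' : K) * (y' : K)) := by group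
      _ = a * ((y' : K) * (z' : K)) := by rw [hzy]
      _ = (a * (y' : K)) * (z' : K) := by group
      _ = ((y' : K) * a) * (z' : K) := by rw [hac]
      _ = (y' : K) * (a * (z' : K)) := by group
  · rw [Subgroup.eq_bot_iff_forall]
    intro x ⟨hx1, hx2⟩
    obtain ⟨a, ha, z, hz, rfl⟩ := hdecomp _ hx1
    obtain ⟨z', hz', rfl⟩ := hz
    obtain ⟨y', hy', hxeq⟩ := hx2
    simp only [Subgroup.coe_subtype] at hxeq
    -- a = (y' z'⁻¹) viewed in K; a ∈ A ⊓ B = ⊥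
    have hamem : a ∈ B := by
      have h1 : a = (y' : K) * ((z' : K))⁻¹ := eq_mul_inv_iff_mul_eq.mpr hxeq.symm
      rw [h1]
      exact mul_mem y'.2 (inv_mem z'.2)
    have ha1 : a = 1 := by
      have : a ∈ A ⊓ B := ⟨ha, hamem⟩
      rwa [dp.2.1, Subgroup.mem_bot] at this
    rw [ha1, one_mul]
    -- now z' ∈ A' ⊓ B' = ⊥
    have hz'B : z' ∈ A' ⊓ B' := by
      refine ⟨hz', ?_⟩
      have h2 : (y' : K) = (z' : K) := by rw [hxeq, ha1, one_mul]
      have : y' = z' := Subtype.ext h2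
      rwa [← this]
    rw [dp'.2.1, Subgroup.mem_bot] at hz'B
    rw [hz'B]
    simp
  · rw [sup_assoc, ← Subgroup.map_sup, dp'.2.2, ← MonoidHom.range_eq_map,
      Subgroup.range_subtype, dp.2.2]

theorem quasi_subfactor (hq : QuasiIndecomposable K) {A B : Subgroup K}
    (dp : IsInternalDirectProd A B) (hA : A ≤ Subgroup.center K) :
    QuasiIndecomposable ↥B := by
  intro A' B' dp'
  rcases hq _ _ (lift_dp dp hA dp') with h | h
  · left
    intro x hx
    have hx' : (x : K) ∈ Subgroup.center K :=
      h (Subgroup.mem_sup_right (Subgroup.mem_map_of_mem _ hx))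
    rw [Subgroup.mem_center_iff]
    intro g
    ext
    exact Subgroup.mem_center_iff.mp hx' (g : K)
  · right
    intro x hx
    have hx' : (x : K) ∈ Subgroup.center K := h (Subgroup.mem_map_of_mem _ hx)
    rw [Subgroup.mem_center_iff]
    intro g
    ext
    exact Subgroup.mem_center_iff.mp hx' (g : K)

theorem exists_step {K : Type} [Group K] [Finite K] (hq : QuasiIndecomposable K)
    (habel : ¬ ∀ a b : K, a * b = b * a)
    {A B : Subgroup K} (dp : IsInternalDirectProd A B) (hA : A ≤ Subgroup.center K)
    (hAne : A ≠ ⊥)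
    (IH : ∀ (L : Type) [Group L] [Finite L], Nat.card L < Nat.card K →
      QuasiIndecomposable L → ∃ Z Hh : Subgroup L, IsCanonicalDecomp Z Hh) :
    ∃ Z Hh : Subgroup K, IsCanonicalDecomp Z Hh := by
  have hqB : QuasiIndecomposable ↥B := quasi_subfactor hq dp hA
  have hcardB : Nat.card ↥B < Nat.card K := by
    rw [card_eq dp]
    have h2 : 1 < Nat.card ↥A := by rw [Subgroup.one_lt_card_iff_ne_bot]; exact hAne
    have h3 : 0 < Nat.card ↥B := Nat.card_pos
    nlinarith
  obtain ⟨Z', Hh', dp', hZ', hc'⟩ := IH ↥B hcardB hqB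
  rcases hc' with hbot | ⟨hna', hind'⟩
  · -- then B is abelian and K would be abelian: contradiction
    exfalso
    apply habel
    have hZtop : Z' = ⊤ := by have h := dp'.2.2; rwa [hbot, sup_bot_eq] at h
    have hBab : ∀ x y : ↥B, x * y = y * x := by
      intro x y
      exact center_comm (hZ' (hZtop ▸ Subgroup.mem_top x)) y
    have hBcen : ∀ b ∈ B, b ∈ Subgroup.center K := by
      intro b hb
      rw [Subgroup.mem_center_iff]
      intro g
      obtain ⟨a', ha', b', hb', rfl⟩ := exists_decomp dp g
      have hbb : b' * b = b * b' := congrArg Subtype.val (hBab ⟨b', hb'⟩ ⟨b, hb⟩)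
      have hab : a' * b = b * a' := dp.1 a' ha' b hb
      calc a' * b' * b = a' * (b' * b) := by group
        _ = a' * (b * b') := by rw [hbb]
        _ = (a' * b) * b' := by group
        _ = (b * a') * b' := by rw [hab]
        _ = b * (a' * b') := by group
    intro g k
    have hgcen : g ∈ Subgroup.center K := by
      obtain ⟨a', ha', b', hb', rfl⟩ := exists_decomp dp g
      exact mul_mem (hA ha') (hBcen b' hb')
    exact center_comm hgcen k
  · -- main case
    have dpK := lift_dp dp hA dp'
    refine ⟨A ⊔ Z'.map B.subtype, Hh'.map B.subtype, dpK, ?_, Or.inr ⟨?_, ?_⟩⟩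
    · rcases hq _ _ dpK with h | h
      · exact h
      · exfalso
        apply hna'
        intro x hx y hy
        have hx' : (x : K) ∈ Subgroup.center K := h (Subgroup.mem_map_of_mem _ hx)
        ext
        exact (Subgroup.mem_center_iff.mp hx' (y : K)).symm
    · -- mapped factor is non-abelian
      intro hab
      apply hna'
      intro x hx y hy
      have := hab (x : K) (Subgroup.mem_map_of_mem _ hx) (y : K)
        (Subgroup.mem_map_of_mem _ hy)
      exact Subtype.ext this
    · exact Indec.of_mulEquiv
        (Subgroup.equivMapOfInjective Hh' B.subtype B.subtype_injective) hind'

theorem exists_canonical : ∀ (n : ℕ) (K : Type) [Group K] [Finite K], Nat.card K ≤ n →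
    QuasiIndecomposable K → ∃ Z Hh : Subgroup K, IsCanonicalDecomp Z Hh := by
  intro n
  induction n with
  | zero =>
    intro K _ _ hcard _
    have : 0 < Nat.card K := Nat.card_pos
    omega
  | succ n ih =>
    intro K _ _ hcard hq
    by_cases habel : ∀ a b : K, a * b = b * a
    · refine ⟨⊤, ⊥, ⟨fun a _ b _ => habel a b, by simp, by simp⟩, ?_, Or.inl rfl⟩
      intro x _
      rw [Subgroup.mem_center_iff]
      exact fun g => habel g x
    · have IH : ∀ (L : Type) [Group L] [Finite L], Nat.card L < Nat.card K →
          QuasiIndecomposable L → ∃ Z Hh : Subgroup L, IsCanonicalDecomp Z Hh := by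
        intro L _ _ hL hqL
        exact ih L (by omega) hqL
      by_cases hind : IndecomposableGroup K
      · refine ⟨⊥, ⊤, ⟨?_, by simp, by simp⟩, bot_le, Or.inr ⟨?_, ?_⟩⟩
        · intro a ha b _
          rw [Subgroup.mem_bot] at ha
          subst ha
          simp
        · intro hab
          exact habel fun a b => hab a (Subgroup.mem_top a) b (Subgroup.mem_top b)
        · exact Indec.of_mulEquiv Subgroup.topEquiv.symm hind
      · unfold IndecomposableGroup at hind
        push_neg at hind
        obtain ⟨A, B, dpAB, hAne, hBne⟩ := hind
        rcases hq A B dpAB with h | h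
        · exact exists_step hq habel dpAB h hAne IH
        · exact exists_step hq habel (IIDP.symm dpAB) h hBne IH

end Exist

/-- **Proposition 16 (Marin–Michel).** A finite quasi-indecomposable group `H` admits a
decomposition `H = Z × Ĥ` with `Z ⊆ Z(H)` and `Ĥ` trivial or indecomposable non-abelian;
in any two such decompositions the central factors are isomorphic and the non-abelian
factors are isomorphic. -/
theorem quasi_indecomposable_canonical_decomposition
    (H : Type) [Group H] [Finite H] (hq : QuasiIndecomposable H) :
    (∃ Z Hhat : Subgroup H, IsCanonicalDecomp Z Hhat) ∧
    (∀ Z₁ Hhat₁ Z₂ Hhat₂ : Subgroup H,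
      IsCanonicalDecomp Z₁ Hhat₁ → IsCanonicalDecomp Z₂ Hhat₂ →
      Nonempty (↥Z₁ ≃* ↥Z₂) ∧ Nonempty (↥Hhat₁ ≃* ↥Hhat₂)) := by
  constructor
  · exact exists_canonical (Nat.card H) H le_rfl hq
  · intro Z₁ Hhat₁ Z₂ Hhat₂ h₁ h₂
    exact canonical_unique Z₁ Hhat₁ Z₂ Hhat₂ h₁ h₂
end

section
/- Let K/K_0 be a finite Galois extension of number fields with Galois group Γ, and let E = E_0 ⊗_{K_0} K be a K_0-form of a finite-dimensional K-vector space E, so that Γ acts on GL(E) and PGL(E). If #Γ is prime to dim E, then H^1(Γ, PGL(E)) = 0: every map γ ↦ A_γ from Γ to PGL(E) satisfying the cocycle condition A_{στ} = A_σ · σ(A_τ) is a coboundary, i.e. there exists a ∈ PGL(E) with A_γ = a^{−1} γ(a) for all γ ∈ Γ. -/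
section GaloisCohomology

variable {K₀ K : Type*} [Field K₀] [Field K] [Algebra K₀ K] {n : ℕ}

/-- The entrywise action of a Galois automorphism `γ ∈ Gal(K/K₀)` on `GL_n(K)`
(through the standard `K₀`-form of `Kⁿ`). -/
def galGL (γ : K ≃ₐ[K₀] K) :
    Matrix.GeneralLinearGroup (Fin n) K →* Matrix.GeneralLinearGroup (Fin n) K :=
  Units.map (RingHom.mapMatrix (γ : K →+* K)).toMonoidHom

/-- The scalar matrix `c·1` as an element of `GL_n(K)`. -/
def scalarGL (c : Kˣ) : Matrix.GeneralLinearGroup (Fin n) K :=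
  Units.map (algebraMap K (Matrix (Fin n) (Fin n) K)).toMonoidHom c

end GaloisCohomology

namespace H1Aux

variable {K₀ K : Type*} [Field K₀] [Field K] [Algebra K₀ K] {n : ℕ}

local notation "Γ" => K ≃ₐ[K₀] K

/-- action of Γ on Kˣ -/
def uact (γ : Γ) : Kˣ →* Kˣ := Units.map (γ : K →+* K).toMonoidHom

@[simp] lemma uact_val (γ : Γ) (c : Kˣ) : ((uact γ c : Kˣ) : K) = γ (c : K) := rfl

@[simp] lemma galGL_val (γ : Γ) (M : Matrix.GeneralLinearGroup (Fin n) K) :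
    ((galGL γ M : Matrix.GeneralLinearGroup (Fin n) K) : Matrix (Fin n) (Fin n) K)
      = (M : Matrix (Fin n) (Fin n) K).map γ := rfl

@[simp] lemma scalarGL_val (c : Kˣ) :
    ((scalarGL c : Matrix.GeneralLinearGroup (Fin n) K) : Matrix (Fin n) (Fin n) K)
      = (c : K) • (1 : Matrix (Fin n) (Fin n) K) := by
  show algebraMap K (Matrix (Fin n) (Fin n) K) (c : K) = _
  rw [Algebra.algebraMap_eq_smul_one]

lemma galGL_one (M : Matrix.GeneralLinearGroup (Fin n) K) : galGL (1 : Γ) M = M := by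
  apply Units.ext
  ext i j
  simp

lemma galGL_mul (σ τ : Γ) (M : Matrix.GeneralLinearGroup (Fin n) K) :
    galGL (σ * τ) M = galGL σ (galGL τ M) := by
  apply Units.ext
  ext i j
  simp

lemma scalarGL_comm (c : Kˣ) (M : Matrix.GeneralLinearGroup (Fin n) K) :
    scalarGL c * M = M * scalarGL c := by
  apply Units.ext
  simp [Units.val_mul, smul_mul_assoc, mul_smul_comm]

lemma scalarGL_mul (c d : Kˣ) :
    (scalarGL (c * d) : Matrix.GeneralLinearGroup (Fin n) K) = scalarGL c * scalarGL d :=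
  map_mul (Units.map (algebraMap K (Matrix (Fin n) (Fin n) K)).toMonoidHom) c d

lemma scalarGL_inv (c : Kˣ) :
    (scalarGL c⁻¹ : Matrix.GeneralLinearGroup (Fin n) K) = (scalarGL c)⁻¹ :=
  map_inv (Units.map (algebraMap K (Matrix (Fin n) (Fin n) K)).toMonoidHom) c

lemma galGL_scalarGL (γ : Γ) (c : Kˣ) :
    galGL γ (scalarGL c : Matrix.GeneralLinearGroup (Fin n) K) = scalarGL (uact γ c) := by
  apply Units.ext
  ext i j
  simp [Matrix.map_apply, Matrix.smul_apply, Matrix.one_apply, apply_ite γ]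

lemma scalarGL_injective (hn : 0 < n) :
    Function.Injective (scalarGL : Kˣ → Matrix.GeneralLinearGroup (Fin n) K) := by
  intro c d h
  have := congrArg (fun M => ((M : Matrix.GeneralLinearGroup (Fin n) K) :
    Matrix (Fin n) (Fin n) K) ⟨0, hn⟩ ⟨0, hn⟩) h
  simp only [scalarGL_val, Matrix.smul_apply, Matrix.one_apply_eq, smul_eq_mul, mul_one] at this
  exact Units.ext this

lemma det_scalarGL (c : Kˣ) :
    Matrix.GeneralLinearGroup.det (scalarGL c : Matrix.GeneralLinearGroup (Fin n) K) = c ^ n := by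
  apply Units.ext
  simp [Matrix.GeneralLinearGroup.val_det_apply, Matrix.det_smul]

lemma det_galGL (γ : Γ) (M : Matrix.GeneralLinearGroup (Fin n) K) :
    Matrix.GeneralLinearGroup.det (galGL γ M) = uact γ (Matrix.GeneralLinearGroup.det M) := by
  apply Units.ext
  simp only [Matrix.GeneralLinearGroup.val_det_apply, uact_val, galGL_val]
  exact (RingHom.map_det (γ : K →+* K) (M : Matrix (Fin n) (Fin n) K)).symm


section H90

variable [FiniteDimensional K₀ K]

lemma hilbert90_GL (B : Γ → Matrix.GeneralLinearGroup (Fin n) K)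
    (hB : ∀ σ τ : Γ, B (σ * τ) = B σ * galGL σ (B τ)) :
    ∃ a : Matrix.GeneralLinearGroup (Fin n) K, ∀ γ : Γ, B γ = a * (galGL γ a)⁻¹ := by
  classical
  have hB1 : B 1 = 1 := by
    have h := hB 1 1
    rw [one_mul, galGL_one] at h
    exact (mul_left_cancel (a := B 1) (by rw [← h, mul_one])).symm
  set p : (Fin n → K) → (Fin n → K) :=
    fun x => ∑ σ : Γ, ((B σ : Matrix (Fin n) (Fin n) K)).mulVec (fun i => σ (x i)) with hp
  have hfix : ∀ (τ : Γ) (x : Fin n → K),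
      ((B τ : Matrix (Fin n) (Fin n) K)).mulVec (fun i => τ (p x i)) = p x := by
    intro τ x
    have hterm : ∀ σ : Γ,
        ((B τ : Matrix (Fin n) (Fin n) K)).mulVec
          (fun i => τ (((B σ : Matrix (Fin n) (Fin n) K)).mulVec (fun k => σ (x k)) i))
        = ((B (τ * σ) : Matrix (Fin n) (Fin n) K)).mulVec (fun i => (τ * σ) (x i)) := by
      intro σ
      have h1 : (fun i => τ (((B σ : Matrix (Fin n) (Fin n) K)).mulVec (fun k => σ (x k)) i))
          = (((B σ : Matrix (Fin n) (Fin n) K)).map τ).mulVec (fun k => τ (σ (x k))) := by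
        funext i
        simp [Matrix.mulVec, dotProduct, Matrix.map_apply, map_sum]
      rw [h1, Matrix.mulVec_mulVec]
      have h2 : (B τ : Matrix (Fin n) (Fin n) K) * ((B σ : Matrix (Fin n) (Fin n) K)).map τ
          = (B (τ * σ) : Matrix (Fin n) (Fin n) K) := by
        rw [hB τ σ, Units.val_mul, galGL_val]
      rw [h2]
      rfl
    have hτp : (fun i => τ (p x i))
        = ∑ σ : Γ, (fun i => τ (((B σ : Matrix (Fin n) (Fin n) K)).mulVec (fun k => σ (x k)) i)) := by
      funext i
      simp [hp, Finset.sum_apply, map_sum]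
    rw [hτp]
    rw [show ((B τ : Matrix (Fin n) (Fin n) K)).mulVec
        (∑ σ : Γ, (fun i => τ (((B σ : Matrix (Fin n) (Fin n) K)).mulVec (fun k => σ (x k)) i)))
        = ∑ σ : Γ, ((B τ : Matrix (Fin n) (Fin n) K)).mulVec
            (fun i => τ (((B σ : Matrix (Fin n) (Fin n) K)).mulVec (fun k => σ (x k)) i)) from
      map_sum ((B τ : Matrix (Fin n) (Fin n) K)).mulVecLin _ _]
    rw [Finset.sum_congr rfl fun σ _ => hterm σ]
    exact Fintype.sum_equiv (Equiv.mulLeft τ)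
      (fun σ => ((B (τ * σ) : Matrix (Fin n) (Fin n) K)).mulVec (fun i => (τ * σ) (x i)))
      (fun ρ => ((B ρ : Matrix (Fin n) (Fin n) K)).mulVec (fun i => ρ (x i)))
      (fun σ => rfl)
  have hspan : Submodule.span K (Set.range p) = ⊤ := by
    by_contra hne
    obtain ⟨f, hf0, hfbot⟩ := Submodule.exists_dual_map_eq_bot_of_lt_top
      (p := Submodule.span K (Set.range p)) (lt_top_iff_ne_top.2 hne) inferInstance
    have hker : ∀ u ∈ Set.range p, f u = 0 := by
      intro u hu
      have hm : f u ∈ Submodule.map f (Submodule.span K (Set.range p)) :=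
        Submodule.mem_map_of_mem (Submodule.subset_span hu)
      rw [hfbot] at hm
      exact (Submodule.mem_bot K).mp hm
    have li : LinearIndependent K (fun σ : Γ => ((σ : K →* K) : K → K)) := by
      have inj : Function.Injective (fun σ : Γ => (σ : K →* K)) := by
        intro σ τ h
        ext y
        exact DFunLike.congr_fun h y
      exact (linearIndependent_monoidHom K K).comp _ inj
    have hgal : ∀ (x : Fin n → K) (σ : Γ),
        f (((B σ : Matrix (Fin n) (Fin n) K)).mulVec (fun i => σ (x i))) = 0 := by
      intro x σ₀
      have hc : ∀ c : K,
          ∑ σ : Γ, f (((B σ : Matrix (Fin n) (Fin n) K)).mulVec (fun i => σ (x i))) * σ c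
            = 0 := by
        intro c
        have h0 : f (p (c • x)) = 0 := hker _ ⟨c • x, rfl⟩
        rw [hp] at h0
        simp only [map_sum] at h0
        rw [← h0]
        apply Finset.sum_congr rfl
        intro σ _
        have hv : (fun i => σ ((c • x) i)) = σ c • (fun i => σ (x i)) := by
          funext i
          simp [Pi.smul_apply, smul_eq_mul, map_mul]
        rw [hv, Matrix.mulVec_smul, map_smul, smul_eq_mul, mul_comm]
      have hrel : ∑ σ : Γ,
          (f (((B σ : Matrix (Fin n) (Fin n) K)).mulVec (fun i => σ (x i)))) •
            ((σ : K →* K) : K → K) = 0 := by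
        funext c
        simpa [Finset.sum_apply, Pi.smul_apply, smul_eq_mul] using hc c
      exact (Fintype.linearIndependent_iff.mp li) _ hrel σ₀
    have hfx : ∀ x : Fin n → K, f x = 0 := by
      intro x
      have := hgal x 1
      simpa [hB1, Matrix.one_mulVec] using this
    exact hf0 (LinearMap.ext hfx)
  obtain ⟨s, hs_sub, hs_span, hs_li⟩ := exists_linearIndependent K (Set.range p)
  rw [hspan] at hs_span
  let bs : Module.Basis s K (Fin n → K) := Module.Basis.mk hs_li (by rw [Subtype.range_coe, hs_span])
  haveI : Fintype s := FiniteDimensional.fintypeBasisIndex bs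
  have hcard : Fintype.card s = n := by
    have h1 := Module.finrank_eq_card_basis bs
    rw [Module.finrank_fintype_fun_eq_card, Fintype.card_fin] at h1
    omega
  let e : Fin n ≃ s := (Fintype.equivFinOfCardEq hcard).symm
  let bs' : Module.Basis (Fin n) K (Fin n → K) := bs.reindex e.symm
  have hbs' : ∀ j, (bs' j : Fin n → K) ∈ Set.range p := by
    intro j
    have : bs' j = (e j : Fin n → K) := by
      simp [bs', Module.Basis.reindex_apply, bs, Module.Basis.mk_apply]
    rw [this]
    exact hs_sub (e j).2
  let aM : Matrix (Fin n) (Fin n) K := (Pi.basisFun K (Fin n)).toMatrix ⇑bs'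
  haveI := (Pi.basisFun K (Fin n)).invertibleToMatrix bs'
  let a : Matrix.GeneralLinearGroup (Fin n) K := unitOfInvertible aM
  have haM : ∀ i j, aM i j = bs' j i := by
    intro i j
    simp [aM, Module.Basis.toMatrix_apply, Pi.basisFun_repr]
  have hkey : ∀ τ : Γ, (B τ : Matrix (Fin n) (Fin n) K) * aM.map τ = aM := by
    intro τ
    ext i j
    obtain ⟨x, hx⟩ := hbs' j
    have hfx := congrFun (hfix τ x) i
    rw [hx] at hfx
    calc ((B τ : Matrix (Fin n) (Fin n) K) * aM.map τ) i j
        = ((B τ : Matrix (Fin n) (Fin n) K)).mulVec (fun k => τ (bs' j k)) i := by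
          simp [Matrix.mul_apply, Matrix.mulVec, dotProduct, Matrix.map_apply, haM]
      _ = bs' j i := hfx
      _ = aM i j := (haM i j).symm
  refine ⟨a, fun γ => ?_⟩
  have hunit : B γ * galGL γ a = a := by
    apply Units.ext
    rw [Units.val_mul, galGL_val]
    exact hkey γ
  exact eq_mul_inv_of_mul_eq hunit

end H90


lemma split_aux {G : Type*} [CommGroup G] (f : G →* G) (v w : ℤ)
    (x X y Y z Z : G) :
    (x ^ v * X ^ w) * ((y ^ v * Y ^ w) * f (z ^ v * Z ^ w))⁻¹
      = (x * (y * f z)⁻¹) ^ v * (X * (Y * f Z)⁻¹) ^ w := by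
  rw [map_mul, map_zpow, map_zpow]
  generalize f z = fz
  generalize f Z = fZ
  rw [mul_zpow x, mul_zpow X, inv_zpow, inv_zpow, mul_zpow y, mul_zpow Y]
  generalize x ^ v = a
  generalize X ^ w = A
  generalize y ^ v = b
  generalize Y ^ w = B
  generalize fz ^ v = c
  generalize fZ ^ w = C
  simp [mul_inv, mul_comm, mul_left_comm, mul_assoc]

end H1Aux

/-- **Proposition 19 (Marin–Michel).** Let `K/K₀` be a finite Galois extension of number
fields with group `Γ`, acting on `GL(E)` and `PGL(E)` through a `K₀`-form of the
finite-dimensional `K`-vector space `E = Kⁿ`.  If `#Γ` is prime to `n = dim E`, then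
`H¹(Γ, PGL(E)) = 0`: every cocycle `γ ↦ A_γ` with values in `PGL(E)` (written here as a
family in `GL(E)` satisfying the cocycle condition up to scalars) is a coboundary, i.e.
there is `a ∈ GL(E)` with `A_γ = a⁻¹·γ(a)` in `PGL(E)` for all `γ ∈ Γ`. -/
theorem h1_pgl_trivial_of_coprime
    (K₀ K : Type) [Field K₀] [Field K] [NumberField K₀] [NumberField K]
    [Algebra K₀ K] [IsGalois K₀ K] [FiniteDimensional K₀ K]
    (n : ℕ)
    (hcop : Nat.Coprime (Nat.card (K ≃ₐ[K₀] K)) n)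
    (A : (K ≃ₐ[K₀] K) → Matrix.GeneralLinearGroup (Fin n) K)
    -- cocycle condition in `PGL(E)`:
    (hcoc : ∀ σ τ : K ≃ₐ[K₀] K, ∃ c : Kˣ,
      A (σ * τ) = scalarGL c * (A σ * galGL σ (A τ))) :
    -- coboundary in `PGL(E)`:
    ∃ a : Matrix.GeneralLinearGroup (Fin n) K, ∀ γ : K ≃ₐ[K₀] K, ∃ c : Kˣ,
      A γ = scalarGL c * (a⁻¹ * galGL γ a) := by

  classical
  rcases Nat.eq_zero_or_pos n with rfl | hn
  · exact ⟨1, fun γ => ⟨1, Units.ext (Matrix.ext (fun i _ => i.elim0))⟩⟩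
  choose c hc using hcoc
  -- the 2-cocycle identity
  have hcoc2 : ∀ σ τ ρ : K ≃ₐ[K₀] K,
      c (σ * τ) ρ * c σ τ = c σ (τ * ρ) * H1Aux.uact σ (c τ ρ) := by
    intro σ τ ρ
    apply H1Aux.scalarGL_injective hn
    have e1 : A (σ * τ * ρ) = scalarGL (c (σ * τ) ρ * c σ τ) *
        (A σ * (galGL σ (A τ) * galGL (σ * τ) (A ρ))) := by
      rw [hc (σ * τ) ρ, hc σ τ, H1Aux.scalarGL_mul]
      simp only [mul_assoc]
    have e2 : A (σ * τ * ρ) = scalarGL (c σ (τ * ρ) * H1Aux.uact σ (c τ ρ)) *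
        (A σ * (galGL σ (A τ) * galGL (σ * τ) (A ρ))) := by
      rw [mul_assoc σ τ ρ, hc σ (τ * ρ), hc τ ρ]
      rw [map_mul (galGL σ), map_mul (galGL σ), H1Aux.galGL_scalarGL, ← H1Aux.galGL_mul]
      rw [H1Aux.scalarGL_mul]
      have hcomm : A σ * (scalarGL (H1Aux.uact σ (c τ ρ)) *
            (galGL σ (A τ) * galGL (σ * τ) (A ρ)))
          = scalarGL (H1Aux.uact σ (c τ ρ)) * (A σ * (galGL σ (A τ) * galGL (σ * τ) (A ρ))) := by
        rw [← mul_assoc, ← H1Aux.scalarGL_comm, mul_assoc]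
      rw [hcomm, ← mul_assoc, ← mul_assoc]
    exact mul_right_cancel (e1.symm.trans e2)
  -- determinants
  have hd : ∀ σ τ : K ≃ₐ[K₀] K,
      Matrix.GeneralLinearGroup.det (A (σ * τ)) = c σ τ ^ n *
        (Matrix.GeneralLinearGroup.det (A σ) *
          H1Aux.uact σ (Matrix.GeneralLinearGroup.det (A τ))) := by
    intro σ τ
    have h := congrArg Matrix.GeneralLinearGroup.det (hc σ τ)
    rw [map_mul, map_mul, H1Aux.det_scalarGL, H1Aux.det_galGL] at h
    exact h
  set d : (K ≃ₐ[K₀] K) → Kˣ := fun γ => Matrix.GeneralLinearGroup.det (A γ) with hd_def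
  -- the norm-type product
  set E : (K ≃ₐ[K₀] K) → Kˣ := fun σ => ∏ τ : K ≃ₐ[K₀] K, c σ τ with hE_def
  set N := Nat.card (K ≃ₐ[K₀] K) with hN
  have he : ∀ σ τ : K ≃ₐ[K₀] K,
      E (σ * τ) * c σ τ ^ N = E σ * H1Aux.uact σ (E τ) := by
    intro σ τ
    have h1 : ∏ ρ : K ≃ₐ[K₀] K, (c (σ * τ) ρ * c σ τ)
        = ∏ ρ : K ≃ₐ[K₀] K, (c σ (τ * ρ) * H1Aux.uact σ (c τ ρ)) :=
      Finset.prod_congr rfl fun ρ _ => hcoc2 σ τ ρ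
    rw [Finset.prod_mul_distrib, Finset.prod_mul_distrib, Finset.prod_const,
      Finset.card_univ] at h1
    rw [show (∏ ρ : K ≃ₐ[K₀] K, c σ (τ * ρ)) = E σ from
      Fintype.prod_equiv (Equiv.mulLeft τ) _ _ (fun ρ => rfl)] at h1
    rw [← map_prod (H1Aux.uact σ)] at h1
    rw [hN, Nat.card_eq_fintype_card]
    exact h1
  -- Bezout
  set u : ℤ := Nat.gcdA N n with hu
  set v : ℤ := Nat.gcdB N n with hv
  have hbez : (n : ℤ) * v + (N : ℤ) * u = 1 := by
    have h1 : ((Nat.gcd N n : ℕ) : ℤ) = N * u + n * v := Nat.gcd_eq_gcd_ab N n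
    rw [hcop.gcd_eq_one] at h1
    push_cast at h1
    linarith
  -- the untwisting scalar
  set b : (K ≃ₐ[K₀] K) → Kˣ := fun γ => d γ ^ v * E γ ^ (-u) with hb_def
  have key : ∀ σ τ : K ≃ₐ[K₀] K,
      b (σ * τ) * (b σ * H1Aux.uact σ (b τ))⁻¹ = c σ τ := by
    intro σ τ
    have hdc : d (σ * τ) * (d σ * H1Aux.uact σ (d τ))⁻¹ = c σ τ ^ n := by
      rw [show d (σ * τ) = c σ τ ^ n * (d σ * H1Aux.uact σ (d τ)) from hd σ τ,
        mul_inv_cancel_right]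
    have hec : E (σ * τ) * (E σ * H1Aux.uact σ (E τ))⁻¹ = (c σ τ ^ N)⁻¹ := by
      rw [← he σ τ, mul_inv, mul_inv_cancel_left]
    have hsplit : (d (σ * τ) ^ v * E (σ * τ) ^ (-u)) *
          ((d σ ^ v * E σ ^ (-u)) * H1Aux.uact σ (d τ ^ v * E τ ^ (-u)))⁻¹
        = (d (σ * τ) * (d σ * H1Aux.uact σ (d τ))⁻¹) ^ v *
          (E (σ * τ) * (E σ * H1Aux.uact σ (E τ))⁻¹) ^ (-u) := by
      exact H1Aux.split_aux (H1Aux.uact σ) v (-u) (d (σ * τ)) (E (σ * τ)) (d σ) (E σ)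
        (d τ) (E τ)
    calc b (σ * τ) * (b σ * H1Aux.uact σ (b τ))⁻¹
        = (d (σ * τ) ^ v * E (σ * τ) ^ (-u)) *
          ((d σ ^ v * E σ ^ (-u)) * H1Aux.uact σ (d τ ^ v * E τ ^ (-u)))⁻¹ := rfl
      _ = (d (σ * τ) * (d σ * H1Aux.uact σ (d τ))⁻¹) ^ v *
          (E (σ * τ) * (E σ * H1Aux.uact σ (E τ))⁻¹) ^ (-u) := hsplit
      _ = (c σ τ ^ n) ^ v * ((c σ τ ^ N)⁻¹) ^ (-u) := by rw [hdc, hec]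
      _ = c σ τ := by
          rw [inv_zpow', neg_neg, ← zpow_natCast (c σ τ) n, ← zpow_natCast (c σ τ) N,
            ← zpow_mul, ← zpow_mul, ← zpow_add, hbez, zpow_one]
  -- the untwisted family is a genuine GL-cocycle
  have hBc : ∀ σ τ : K ≃ₐ[K₀] K,
      (scalarGL (b (σ * τ)))⁻¹ * A (σ * τ)
        = ((scalarGL (b σ))⁻¹ * A σ) * galGL σ ((scalarGL (b τ))⁻¹ * A τ) := by
    intro σ τ
    have hgal : galGL σ ((scalarGL (b τ))⁻¹ * A τ)
        = (scalarGL (H1Aux.uact σ (b τ)))⁻¹ * galGL σ (A τ) := by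
      rw [map_mul, map_inv, H1Aux.galGL_scalarGL]
    rw [hgal]
    have hcm0 : Commute (scalarGL (H1Aux.uact σ (b τ))) (A σ) :=
      H1Aux.scalarGL_comm (H1Aux.uact σ (b τ)) (A σ)
    have hcm : Commute ((scalarGL (H1Aux.uact σ (b τ)))⁻¹) (A σ) := hcm0.inv_left
    have hswap : A σ * ((scalarGL (H1Aux.uact σ (b τ)))⁻¹ * galGL σ (A τ))
        = (scalarGL (H1Aux.uact σ (b τ)))⁻¹ * (A σ * galGL σ (A τ)) := by
      rw [← mul_assoc, ← hcm.eq, mul_assoc]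
    have huu : (b (σ * τ))⁻¹ * c σ τ = (b σ)⁻¹ * (H1Aux.uact σ (b τ))⁻¹ := by
      rw [← key σ τ, ← mul_inv, inv_mul_cancel_left]
    have hs : ((scalarGL (b (σ * τ)))⁻¹ * scalarGL (c σ τ) :
          Matrix.GeneralLinearGroup (Fin n) K)
        = (scalarGL (b σ))⁻¹ * (scalarGL (H1Aux.uact σ (b τ)))⁻¹ :=
      calc ((scalarGL (b (σ * τ)))⁻¹ * scalarGL (c σ τ) : Matrix.GeneralLinearGroup (Fin n) K)
          = scalarGL ((b (σ * τ))⁻¹ * c σ τ) := by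
            rw [← H1Aux.scalarGL_inv, ← H1Aux.scalarGL_mul]
        _ = scalarGL ((b σ)⁻¹ * (H1Aux.uact σ (b τ))⁻¹) := by rw [huu]
        _ = (scalarGL (b σ))⁻¹ * (scalarGL (H1Aux.uact σ (b τ)))⁻¹ := by
            rw [← H1Aux.scalarGL_inv, ← H1Aux.scalarGL_inv, ← H1Aux.scalarGL_mul]
    rw [mul_assoc, hswap, hc σ τ, ← mul_assoc, ← mul_assoc, hs]
    simp only [mul_assoc]
  obtain ⟨a, ha⟩ := H1Aux.hilbert90_GL (fun γ => (scalarGL (b γ))⁻¹ * A γ) hBc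
  refine ⟨a⁻¹, fun γ => ⟨b γ, ?_⟩⟩
  rw [inv_inv, map_inv, ← ha γ]
  exact (mul_inv_cancel_left (scalarGL (b γ)) (A γ)).symm
end
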